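/- arXiv:2006.00541 — 4 statements merged into one kernel-verified Lean document; each statement's English description precedes it below -/
import Mathlib

section
/- Let Γ ⊂ ℚ* be a finitely generated subgroup and m ≥ 1. Then tildeΓ(m) admits the following description: if 2 ∤ m, tildeΓ(m) = {(ℚ*)^{m₂}} is trivial; if v₂(m) = 1, tildeΓ(m) = {γ ∈ Γ(2) : γ' ≡ 1 mod 4}; if v₂(m) = 2, tildeΓ(m) = {γ ∈ Γ(4) : either γ' = γ₀² with γ₀ odd, or γ' = −γ₀² with γ₀ even (γ₀ a squarefree positive integer)}; if v₂(m) ≥ 3, tildeΓ(m) = {γ ∈ Γ(m₂)[2] : the class γ consists of positive rationals}. -/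
/- Common definitions: finitely generated multiplicative subgroups `Γ ⊆ ℚˣ`,
the quotients `Γ(n) = Γ·(ℚ*)ⁿ/(ℚ*)ⁿ`, the invariants `δ(γ)`, the group `tildeΓ(m)`,
the constants `A(Γ,m)` and `B_{Γ,k}`, and the density `ρ(Γ,m)`. -/

open scoped Classical

noncomputable section

/-- The subgroup `(ℚˣ)ⁿ` of `n`-th powers in `ℚˣ`. -/
def powSubgroup (n : ℕ) : Subgroup ℚˣ := (powMonoidHom n : ℚˣ →* ℚˣ).range

/-- `Γ(n)`: the image of `Γ` in `ℚˣ/(ℚˣ)ⁿ`. -/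
def GammaMod (Γ : Subgroup ℚˣ) (n : ℕ) : Subgroup (ℚˣ ⧸ powSubgroup n) :=
  Γ.map (QuotientGroup.mk' (powSubgroup n))

/-- The unit of `ℚˣ` determined by a nonzero integer (junk value `1` at `0`). -/
def intUnit (b : ℤ) : ℚˣ := if h : (b : ℚ) = 0 then 1 else Units.mk0 (b : ℚ) h

/-- The unit of `ℚˣ` determined by a nonzero natural number. -/
def natUnit (b : ℕ) : ℚˣ := intUnit b

/-- A class modulo `n`-th powers contains a positive rational (for even `n` this says
that the class consists of positive rationals). -/
def IsPosClass (n : ℕ) (c : ℚˣ ⧸ powSubgroup n) : Prop :=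
  ∃ x : ℚˣ, QuotientGroup.mk x = c ∧ 0 < (x : ℚ)

/-- `δ(γ)` for a class `γ` modulo `(ℚˣ)ⁿ` (`n = 2^α`): if `γ = ±γ₀^(n/2)·(ℚˣ)ⁿ` with
`γ₀ > 1` squarefree, this is the discriminant of `ℚ(√γ₀)`, namely `γ₀` if `γ₀ ≡ 1 mod 4`
and `4γ₀` otherwise; the trivial class gets the value `1`. -/
def deltaClass (n : ℕ) (c : ℚˣ ⧸ powSubgroup n) : ℕ :=
  if c = 1 then 1
  else if h : ∃ g : ℕ, Squarefree g ∧ 1 < g ∧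
      ((QuotientGroup.mk (natUnit g ^ (n / 2)) : ℚˣ ⧸ powSubgroup n) = c ∨
       (QuotientGroup.mk (-(natUnit g ^ (n / 2))) : ℚˣ ⧸ powSubgroup n) = c)
  then (if h.choose % 4 = 1 then h.choose else 4 * h.choose)
  else 1

/-- The set `tildeΓ(m) ⊆ Γ(m₂)[2]`, where `m₂ = 2^(v₂(m))`. -/
def tildeGamma (Γ : Subgroup ℚˣ) (m : ℕ) :
    Set (ℚˣ ⧸ powSubgroup (2 ^ padicValNat 2 m)) :=
  {c | c ∈ GammaMod Γ (2 ^ padicValNat 2 m) ∧ c ^ 2 = 1 ∧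
    (if IsPosClass (2 ^ padicValNat 2 m) c
     then padicValNat 2 (deltaClass (2 ^ padicValNat 2 m) c) ≤ padicValNat 2 m
     else padicValNat 2 (deltaClass (2 ^ padicValNat 2 m) c) = padicValNat 2 m + 1)}

/-- `B_{Γ,k}`. -/
def BGamma (Γ : Subgroup ℚˣ) (k : ℕ) : ℝ :=
  ∑ᶠ c ∈ tildeGamma Γ k,
    ∏ᶠ ℓ ∈ {ℓ : ℕ | ℓ.Prime ∧ ℓ ∣ deltaClass (2 ^ padicValNat 2 k) c ∧ ¬ ℓ ∣ k},
      (-1 : ℝ) / (((ℓ : ℝ) - 1) * (Nat.card (GammaMod Γ ℓ)) - 1)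

/-- `A(Γ,m)`. -/
def AGamma (Γ : Subgroup ℚˣ) (m : ℕ) : ℝ :=
  (1 / ((Nat.totient m : ℝ) * (Nat.card (GammaMod Γ m) : ℝ))) *
  (∏ᶠ ℓ ∈ {ℓ : ℕ | ℓ.Prime ∧ ℓ ≠ 2 ∧ ℓ ∣ m},
      (1 - (Nat.card (GammaMod Γ (ℓ ^ padicValNat ℓ m)) : ℝ) /
        ((ℓ : ℝ) * (Nat.card (GammaMod Γ (ℓ ^ (padicValNat ℓ m + 1))) : ℝ)))) *
  (∏' ℓ : {ℓ : ℕ // ℓ.Prime ∧ ℓ ≠ 2 ∧ ¬ ℓ ∣ m},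
      (1 - 1 / ((((ℓ : ℕ) : ℝ) - 1) * (Nat.card (GammaMod Γ ((ℓ : ℕ))) : ℝ))))

/-- The set `{ζ_d} ∪ Γ^{1/d}` inside `ℂ`, where `Γ^{1/d}` is the set of real `d`-th
roots of elements of `Γ`. -/
def kummerSet (Γ : Subgroup ℚˣ) (d : ℕ) : Set ℂ :=
  {Complex.exp (2 * Real.pi * Complex.I / d)} ∪
  {z : ℂ | ∃ x : ℝ, (x : ℂ) = z ∧ ∃ γ ∈ Γ, x ^ d = ((γ : ℚ) : ℝ)}

/-- The degree `[ℚ(ζ_d, Γ^{1/d}) : ℚ]`. -/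
def kummerDegree (Γ : Subgroup ℚˣ) (d : ℕ) : ℕ :=
  Module.finrank ℚ (IntermediateField.adjoin ℚ (kummerSet Γ d))

/-- `ρ(Γ,m) = ∑_{k ≥ 1} μ(k)/[ℚ(ζ_{mk},Γ^{1/mk}):ℚ]`. -/
def rhoGamma (Γ : Subgroup ℚˣ) (m : ℕ) : ℝ :=
  ∑' k : ℕ, if k = 0 then 0 else
    (ArithmeticFunction.moebius k : ℝ) / (kummerDegree Γ (m * k) : ℝ)

/-- `Γ` has rank `r ≥ 1`: it contains an element of infinite order. -/
def HasPositiveRank (Γ : Subgroup ℚˣ) : Prop :=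
  ∃ g ∈ Γ, ∀ n : ℕ, 0 < n → g ^ n ≠ 1

/-- The discriminant of the quadratic field `ℚ(√g)`: writing `g = d·t²` with `d` a
squarefree integer, it is `d` if `d ≡ 1 mod 4` and `4d` otherwise (in particular it is
`1` if `g` is a square of a rational; junk value `0` at `g = 0`). -/
def quadDisc (g : ℚ) : ℤ :=
  if h : ∃ d : ℤ, Squarefree d ∧ ∃ t : ℚ, g = (d : ℚ) * t ^ 2
  then (if h.choose % 4 = 1 then h.choose else 4 * h.choose)
  else 0

/-- The support of `Γ`: primes occurring with nonzero valuation in some element of `Γ`. -/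
def suppGamma (Γ : Subgroup ℚˣ) : Set ℕ :=
  {ℓ : ℕ | ℓ.Prime ∧ ∃ γ ∈ Γ, padicValRat ℓ (γ : ℚ) ≠ 0}

/-- The reduction `Γ_p` of `Γ` modulo a prime `p` (not in the support of `Γ`),
as a subgroup of `(ZMod p)ˣ = 𝔽_pˣ`. -/
def reductionGamma (Γ : Subgroup ℚˣ) (p : ℕ) : Subgroup (ZMod p)ˣ :=
  Subgroup.closure
    {x : (ZMod p)ˣ | ∃ γ ∈ Γ,
      (x : ZMod p) = ((γ : ℚ).num : ZMod p) * (((γ : ℚ).den : ZMod p))⁻¹}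

/-- The `m`-th cyclotomic field `K_m = ℚ(ζ_m)` inside `ℂ`. -/
def cycloField (m : ℕ) : IntermediateField ℚ ℂ :=
  IntermediateField.adjoin ℚ {Complex.exp (2 * Real.pi * Complex.I / m)}

/-- `tildeΓ_{m,d} = (Γ·(ℚ*)^d ∩ (K_m^*)^d)/(ℚ*)^d`, as a subset of `ℚˣ/(ℚˣ)^d`. -/
def tildeGammaMD (Γ : Subgroup ℚˣ) (m d : ℕ) : Set (ℚˣ ⧸ powSubgroup d) :=
  {c | ∃ x : ℚˣ, QuotientGroup.mk x = c ∧ (∃ γ ∈ Γ, ∃ y : ℚˣ, x = γ * y ^ d) ∧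
    ∃ z ∈ cycloField m, z ^ d = ((x : ℚ) : ℂ)}

/-- The Artin constant `A = ∏_ℓ (1 - 1/(ℓ² - ℓ))`. -/
def artinConst : ℝ :=
  ∏' ℓ : {ℓ : ℕ // ℓ.Prime}, (1 - 1 / (((ℓ : ℕ) : ℝ) ^ 2 - ((ℓ : ℕ) : ℝ)))

/-- The subgroup `⟨-1, a⟩` of `ℚˣ` generated by `-1` and a rational `a`. -/
def negOneAGroup (a : ℚ) : Subgroup ℚˣ :=
  Subgroup.closure {u : ℚˣ | (u : ℚ) = -1 ∨ (u : ℚ) = a}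

/-- `τ_{a,m}` (depending only on `h`, `m` and `a₁`). -/
def tau (h m a₁ : ℕ) : ℝ :=
  if padicValNat 2 m < padicValNat 2 h then 0
  else if padicValNat 2 h = padicValNat 2 m ∧ padicValNat 2 m = 0 ∧ 2 ∣ h * a₁ then 0
  else if (padicValNat 2 h = 0 ∧ padicValNat 2 m = 0 ∧ ¬ 2 ∣ h * a₁) ∨
      (padicValNat 2 h = padicValNat 2 m ∧ 0 < padicValNat 2 m) ∨
      (padicValNat 2 h < padicValNat 2 m ∧ padicValNat 2 m = 1 ∧ 2 ∣ h * a₁) then -1/3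
  else 1

end

lemma mem_powSubgroup {n : ℕ} {x : ℚˣ} : x ∈ powSubgroup n ↔ ∃ u : ℚˣ, u ^ n = x := Iff.rfl

lemma mk_eq_mk {n : ℕ} {x y : ℚˣ} :
    (QuotientGroup.mk x : ℚˣ ⧸ powSubgroup n) = QuotientGroup.mk y ↔ ∃ u : ℚˣ, y = x * u ^ n := by
  rw [QuotientGroup.eq]
  constructor
  · rintro ⟨u, hu⟩
    refine ⟨u, ?_⟩
    rw [powMonoidHom_apply] at hu
    rw [hu]; group
  · rintro ⟨u, hu⟩
    exact ⟨u, by rw [powMonoidHom_apply, hu]; group⟩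

lemma intUnit_coe {b : ℤ} (hb : b ≠ 0) : ((intUnit b : ℚˣ) : ℚ) = b := by
  rw [intUnit, dif_neg (by exact_mod_cast hb)]; rfl

lemma natUnit_coe {b : ℕ} (hb : b ≠ 0) : ((natUnit b : ℚˣ) : ℚ) = b := by
  rw [natUnit, intUnit_coe (by exact_mod_cast hb)]; norm_cast


-- rational with integer square is an integer
lemma exists_int_of_sq_int (q : ℚ) (k : ℤ) (h : q ^ 2 = k) : ∃ s : ℤ, (s : ℚ) = q := by
  have hd : q.den = 1 := by
    have h1 : (q ^ 2).den = 1 := by rw [h]; exact Rat.den_intCast k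
    rw [Rat.den_pow] at h1
    nlinarith [q.pos]
  exact ⟨q.num, by rw [← Rat.num_div_den q, hd]; simp⟩

lemma nat_sqfree_mul_sq {a b s : ℕ} (ha : Squarefree a) (hb : Squarefree b)
    (h : a * b = s ^ 2) : a = b := by
  have ha0 := ha.ne_zero
  have hb0 := hb.ne_zero
  have hs0 : s ≠ 0 := by rintro rfl; simp at h; tauto
  refine Nat.eq_of_factorization_eq ha0 hb0 fun p => ?_
  have hf := congrArg (fun n => n.factorization p) h
  simp only [Nat.factorization_mul ha0 hb0, Nat.factorization_pow, Finsupp.add_apply,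
    Finsupp.smul_apply, smul_eq_mul] at hf
  have h1 : a.factorization p ≤ 1 := ha.natFactorization_le_one p
  have h2 : b.factorization p ≤ 1 := hb.natFactorization_le_one p
  omega

lemma int_sqfree_unique {b b' : ℤ} (hb : Squarefree b) (hb' : Squarefree b') (t : ℚ)
    (h : (b : ℚ) = (b' : ℚ) * t ^ 2) : b = b' := by
  have hb0 : b ≠ 0 := hb.ne_zero
  have hb'0 : b' ≠ 0 := hb'.ne_zero
  have ht : t ≠ 0 := by rintro rfl; simp at h; exact hb0 (by exact_mod_cast h)
  have key : ((b * b' : ℤ) : ℚ) = ((b' : ℚ) * t) ^ 2 := by push_cast; rw [h]; ring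
  obtain ⟨s, hs⟩ := exists_int_of_sq_int ((b' : ℚ) * t) (b * b') key.symm
  have hss : s ^ 2 = b * b' := by
    have : ((s ^ 2 : ℤ) : ℚ) = ((b * b' : ℤ) : ℚ) := by push_cast [← hs] at key ⊢; linarith [key]
    exact_mod_cast this
  have hnat : b.natAbs = b'.natAbs := by
    apply nat_sqfree_mul_sq (Int.squarefree_natAbs.mpr hb) (Int.squarefree_natAbs.mpr hb')
      (s := s.natAbs)
    have := congrArg Int.natAbs hss
    simpa [Int.natAbs_mul, Int.natAbs_pow] using this.symm
  rcases Int.natAbs_eq_natAbs_iff.mp hnat with h1 | h1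
  · exact h1
  · exfalso
    rw [h1] at h
    push_cast at h
    have ht2 : 0 < t ^ 2 := by positivity
    rcases lt_trichotomy (b' : ℚ) 0 with hc | hc | hc
    · nlinarith
    · exact hb'0 (by exact_mod_cast hc)
    · nlinarith

lemma exists_squarefree_rep (x : ℚˣ) :
    ∃ b : ℤ, Squarefree b ∧ ∃ u : ℚˣ, (x : ℚ) = (b : ℚ) * (u : ℚ) ^ 2 := by
  set q : ℚ := (x : ℚ) with hq
  have hq0 : q ≠ 0 := x.ne_zero
  have hnum : q.num ≠ 0 := Rat.num_ne_zero.mpr hq0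
  have hdenN : (q.den : ℚ) ≠ 0 := by exact_mod_cast q.den_nz
  have hden : (q.den : ℤ) ≠ 0 := by exact_mod_cast q.den_nz
  set k : ℤ := q.num * (q.den : ℤ) with hk
  have hk0 : k ≠ 0 := mul_ne_zero hnum hden
  obtain ⟨a, t, hat, ha⟩ := Nat.sq_mul_squarefree k.natAbs
  have hka : k.natAbs ≠ 0 := Int.natAbs_ne_zero.mpr hk0
  have ht0 : t ≠ 0 := by rintro rfl; simp at hat; exact hka hat.symm
  set b : ℤ := k.sign * (a : ℤ) with hb
  have hbabs : b.natAbs = a := by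
    rw [hb, Int.natAbs_mul]
    simp [Int.natAbs_sign_of_ne_zero hk0]
  have hbsf : Squarefree b := by
    rw [← Int.squarefree_natAbs, hbabs]; exact ha
  have hkb : k = b * (t : ℤ) ^ 2 := by
    conv_lhs => rw [← Int.sign_mul_natAbs k, ← hat]
    rw [hb]; push_cast; ring
  have htQ : ((t : ℚ) / (q.den : ℚ)) ≠ 0 := by
    apply div_ne_zero _ hdenN
    exact_mod_cast ht0
  refine ⟨b, hbsf, Units.mk0 _ htQ, ?_⟩
  have hqd : q * (q.den : ℚ) = (q.num : ℚ) := by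
    have h := Rat.num_div_den q
    rw [div_eq_iff hdenN] at h
    linarith
  have h1 : q * (q.den : ℚ) ^ 2 = (b : ℚ) * (t : ℚ) ^ 2 := by
    have hkQ : ((k : ℤ) : ℚ) = (b : ℚ) * (t : ℚ) ^ 2 := by rw [hkb]; push_cast; ring
    calc q * (q.den : ℚ) ^ 2 = (q * q.den) * q.den := by ring
      _ = (q.num : ℚ) * q.den := by rw [hqd]
      _ = ((k : ℤ) : ℚ) := by rw [hk]; push_cast; ring
      _ = (b : ℚ) * (t : ℚ) ^ 2 := hkQ
  rw [Units.val_mk0]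
  rw [div_pow]
  rw [mul_div_assoc', eq_div_iff (pow_ne_zero 2 hdenN)]
  linarith [h1]

lemma isPosClass_mk_iff {n : ℕ} (hn : Even n) {x : ℚˣ} :
    IsPosClass n (QuotientGroup.mk x) ↔ 0 < (x : ℚ) := by
  constructor
  · rintro ⟨y, hy, hpos⟩
    obtain ⟨u, hu⟩ := mk_eq_mk.mp hy
    have hx : (x : ℚ) = (y : ℚ) * ((u : ℚ)) ^ n := by
      rw [hu, Units.val_mul, Units.val_pow_eq_pow_val]
    have hun : 0 < ((u : ℚ)) ^ n := hn.pow_pos u.ne_zero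
    rw [hx]; exact mul_pos hpos hun
  · intro h; exact ⟨x, rfl, h⟩

lemma not_isPosClass_of_neg {n : ℕ} (hn : Even n) {x : ℚˣ} (hx : (x : ℚ) < 0) :
    ¬ IsPosClass n (QuotientGroup.mk x) := fun h =>
  absurd ((isPosClass_mk_iff hn).mp h) (by linarith)

lemma mk_ne_one_of_neg {n : ℕ} (hn : Even n) {x : ℚˣ} (hx : (x : ℚ) < 0) :
    (QuotientGroup.mk x : ℚˣ ⧸ powSubgroup n) ≠ 1 := by
  intro h
  obtain ⟨u, hu⟩ := (QuotientGroup.eq_one_iff x).mp h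
  rw [powMonoidHom_apply] at hu
  have h2 : ((u : ℚ)) ^ n = (x : ℚ) := by
    rw [← Units.val_pow_eq_pow_val, hu]
  nlinarith [hn.pow_pos u.ne_zero]

lemma intUnit_mk_inj {n : ℕ} (hn : n = 2) {b b' : ℤ} (hb : Squarefree b) (hb' : Squarefree b')
    (h : (QuotientGroup.mk (intUnit b) : ℚˣ ⧸ powSubgroup n) = QuotientGroup.mk (intUnit b')) :
    b = b' := by
  subst hn
  obtain ⟨u, hu⟩ := mk_eq_mk.mp h
  have hq : (b' : ℚ) = (b : ℚ) * ((u : ℚ)) ^ 2 := by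
    rw [← intUnit_coe hb.ne_zero, ← intUnit_coe hb'.ne_zero, hu, Units.val_mul,
      Units.val_pow_eq_pow_val]
  exact (int_sqfree_unique hb' hb (u : ℚ) hq).symm

lemma squarefree_int_of_nat {g : ℕ} (hg : Squarefree g) : Squarefree (g : ℤ) := by
  rw [← Int.squarefree_natAbs]; simpa using hg

lemma deltaClass_one (n : ℕ) : deltaClass n 1 = 1 := by rw [deltaClass, if_pos rfl]

lemma deltaClass_eq_of {n : ℕ} {c : ℚˣ ⧸ powSubgroup n} (hc : c ≠ 1) {g : ℕ}
    (hg : Squarefree g) (h1 : 1 < g)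
    (hrep : (QuotientGroup.mk (natUnit g ^ (n / 2)) : ℚˣ ⧸ powSubgroup n) = c ∨
      (QuotientGroup.mk (-(natUnit g ^ (n / 2))) : ℚˣ ⧸ powSubgroup n) = c)
    (huniq : ∀ g' : ℕ, Squarefree g' → 1 < g' →
      ((QuotientGroup.mk (natUnit g' ^ (n / 2)) : ℚˣ ⧸ powSubgroup n) = c ∨
        (QuotientGroup.mk (-(natUnit g' ^ (n / 2))) : ℚˣ ⧸ powSubgroup n) = c) → g' = g) :
    deltaClass n c = if g % 4 = 1 then g else 4 * g := by
  have hex : ∃ g' : ℕ, Squarefree g' ∧ 1 < g' ∧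
      ((QuotientGroup.mk (natUnit g' ^ (n / 2)) : ℚˣ ⧸ powSubgroup n) = c ∨
        (QuotientGroup.mk (-(natUnit g' ^ (n / 2))) : ℚˣ ⧸ powSubgroup n) = c) :=
    ⟨g, hg, h1, hrep⟩
  rw [deltaClass, if_neg hc, dif_pos hex]
  obtain ⟨hsf, hlt, hr⟩ := hex.choose_spec
  rw [huniq _ hsf hlt hr]

lemma deltaClass_eq_one_of {n : ℕ} {c : ℚˣ ⧸ powSubgroup n} (hc : c ≠ 1)
    (h : ¬ ∃ g : ℕ, Squarefree g ∧ 1 < g ∧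
      ((QuotientGroup.mk (natUnit g ^ (n / 2)) : ℚˣ ⧸ powSubgroup n) = c ∨
        (QuotientGroup.mk (-(natUnit g ^ (n / 2))) : ℚˣ ⧸ powSubgroup n) = c)) :
    deltaClass n c = 1 := by
  rw [deltaClass, if_neg hc, dif_neg h]

lemma deltaClass_v2_le (n : ℕ) (c : ℚˣ ⧸ powSubgroup n) :
    padicValNat 2 (deltaClass n c) ≤ 3 := by
  rw [deltaClass]
  split_ifs with h1 h2 h3
  · simp
  · -- g % 4 = 1, so g is odd
    have hodd : ¬ (2 ∣ h2.choose) := by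
      rintro ⟨k, hk⟩; omega
    rw [padicValNat.eq_zero_of_not_dvd hodd]; omega
  · -- 4 * g with g squarefree
    obtain ⟨hsf, hlt, -⟩ := h2.choose_spec
    have hg0 : h2.choose ≠ 0 := hsf.ne_zero
    have hv : padicValNat 2 h2.choose ≤ 1 := by
      by_contra hv
      push_neg at hv
      have h4 : 2 ^ 2 ∣ 2 ^ padicValNat 2 h2.choose := pow_dvd_pow 2 hv
      have : (2 * 2 : ℕ) ∣ h2.choose := by
        have := pow_padicValNat_dvd (p := 2) (n := h2.choose)
        calc (2 * 2 : ℕ) = 2 ^ 2 := by norm_num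
          _ ∣ 2 ^ padicValNat 2 h2.choose := h4
          _ ∣ h2.choose := this
      exact absurd (hsf 2 this) (by norm_num)
    have : padicValNat 2 (4 * h2.choose) = 2 + padicValNat 2 h2.choose := by
      rw [padicValNat.mul (by norm_num) hg0]
      congr 1
      rw [show (4 : ℕ) = 2 ^ 2 by norm_num, padicValNat.prime_pow]
    omega
  · simp

lemma natUnit_eq_intUnit (g : ℕ) : natUnit g = intUnit (g : ℤ) := rfl

lemma eq_one_of_sq_eq {b : ℤ} (hb : Squarefree b) (q : ℚ) (h : q ^ 2 = (b : ℚ)) : b = 1 := by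
  obtain ⟨s, hs⟩ := exists_int_of_sq_int q b h
  have hsb : s ^ 2 = b := by
    have : ((s ^ 2 : ℤ) : ℚ) = ((b : ℤ) : ℚ) := by push_cast [hs]; exact h
    exact_mod_cast this
  have hdvd : s * s ∣ b := ⟨1, by rw [mul_one, ← hsb]; ring⟩
  have := hb s hdvd
  rcases Int.isUnit_iff.mp this with h1 | h1 <;> rw [← hsb, h1] <;> ring

lemma exists_intUnit_mk {n : ℕ} (hn : n = 2) (x : ℚˣ) :
    ∃ b : ℤ, Squarefree b ∧
      (QuotientGroup.mk (intUnit b) : ℚˣ ⧸ powSubgroup n) = QuotientGroup.mk x := by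
  subst hn
  obtain ⟨b, hb, u, hu⟩ := exists_squarefree_rep x
  refine ⟨b, hb, mk_eq_mk.mpr ⟨u, Units.ext ?_⟩⟩
  rw [Units.val_mul, Units.val_pow_eq_pow_val, intUnit_coe hb.ne_zero]
  exact hu

lemma sq_class_eq_one {n : ℕ} (hn : n = 2) (c : ℚˣ ⧸ powSubgroup n) : c ^ 2 = 1 := by
  subst hn
  induction c using QuotientGroup.induction_on with
  | H x =>
    have : ((QuotientGroup.mk x : ℚˣ ⧸ powSubgroup 2)) ^ 2 = QuotientGroup.mk (x ^ 2) := rfl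
    rw [this, QuotientGroup.eq_one_iff]
    exact ⟨x, rfl⟩

lemma mk_pos_ne_one {n : ℕ} (hn : n = 2) {b : ℤ} (hb : Squarefree b) (h1 : 1 < b) :
    (QuotientGroup.mk (intUnit b) : ℚˣ ⧸ powSubgroup n) ≠ 1 := by
  subst hn
  intro h
  obtain ⟨u, hu⟩ := (QuotientGroup.eq_one_iff _).mp h
  rw [powMonoidHom_apply] at hu
  have hq : ((u : ℚ)) ^ 2 = (b : ℚ) := by
    rw [← Units.val_pow_eq_pow_val, hu, intUnit_coe hb.ne_zero]
  have := eq_one_of_sq_eq hb _ hq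
  omega

-- n = 4 material
lemma sq_torsion_rep {n : ℕ} (hn : n = 4) (x : ℚˣ)
    (h : (QuotientGroup.mk x : ℚˣ ⧸ powSubgroup n) ^ 2 = 1) :
    ∃ g : ℕ, Squarefree g ∧ 0 < g ∧ ∃ u : ℚˣ,
      x = natUnit g ^ 2 * u ^ 4 ∨ x = -(natUnit g ^ 2) * u ^ 4 := by
  subst hn
  have h2 : ((QuotientGroup.mk (x ^ 2) : ℚˣ ⧸ powSubgroup 4)) = 1 := h
  obtain ⟨w, hw⟩ := (QuotientGroup.eq_one_iff _).mp h2
  rw [powMonoidHom_apply] at hw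
  obtain ⟨b, hb, u, hu⟩ := exists_squarefree_rep w
  refine ⟨b.natAbs, Int.squarefree_natAbs.mpr hb, Int.natAbs_pos.mpr hb.ne_zero, u, ?_⟩
  have hxw : (x : ℚ) ^ 2 = ((w : ℚ) ^ 2) ^ 2 := by
    have h4 : ((w : ℚ)) ^ 4 = ((x : ℚ)) ^ 2 := by
      rw [← Units.val_pow_eq_pow_val, ← Units.val_pow_eq_pow_val, hw]
    rw [← h4]; ring
  have hb2 : ((b : ℚ)) ^ 2 = ((b.natAbs : ℚ)) ^ 2 := by
    rw [Nat.cast_natAbs, Int.cast_abs, sq_abs]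
  have hw2 : (w : ℚ) ^ 2 = (b.natAbs : ℚ) ^ 2 * ((u : ℚ)) ^ 4 := by
    rw [hu, ← hb2]; ring
  have hcoe : ((natUnit b.natAbs ^ 2 * u ^ 4 : ℚˣ) : ℚ) = (b.natAbs : ℚ) ^ 2 * ((u : ℚ)) ^ 4 := by
    rw [Units.val_mul, Units.val_pow_eq_pow_val, Units.val_pow_eq_pow_val,
      natUnit_coe (Int.natAbs_pos.mpr hb.ne_zero).ne']
  have hkey : (x : ℚ) ^ 2 = ((natUnit b.natAbs ^ 2 * u ^ 4 : ℚˣ) : ℚ) ^ 2 := by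
    rw [hxw, hw2, hcoe]
  rcases sq_eq_sq_iff_eq_or_eq_neg.mp hkey with hcase | hcase
  · exact Or.inl (Units.ext hcase)
  · refine Or.inr (Units.ext ?_)
    rw [hcase]
    simp only [Units.val_mul, Units.val_neg]
    ring


lemma v2_sqfree_le {g : ℕ} (hg : Squarefree g) : padicValNat 2 g ≤ 1 := by
  by_contra hv
  push_neg at hv
  have h4 : (2 * 2 : ℕ) ∣ g := by
    calc (2 * 2 : ℕ) = 2 ^ 2 := by norm_num
      _ ∣ 2 ^ padicValNat 2 g := pow_dvd_pow 2 hv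
      _ ∣ g := pow_padicValNat_dvd
  exact absurd (hg 2 h4) (by norm_num)

lemma v2_delta_if {g : ℕ} (hg : Squarefree g) (h1 : 1 < g) :
    padicValNat 2 (if g % 4 = 1 then g else 4 * g) =
      if g % 4 = 1 then 0 else if g % 4 = 3 then 2 else 3 := by
  have hg0 : g ≠ 0 := hg.ne_zero
  have h4 : ¬ ((2 * 2 : ℕ) ∣ g) := fun hd => absurd (hg 2 hd) (by norm_num)
  have hle : padicValNat 2 g ≤ 1 := v2_sqfree_le hg
  by_cases hm1 : g % 4 = 1
  · rw [if_pos hm1, if_pos hm1]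
    exact padicValNat.eq_zero_of_not_dvd (by omega)
  · rw [if_neg hm1, if_neg hm1]
    have hmul : padicValNat 2 (4 * g) = 2 + padicValNat 2 g := by
      rw [padicValNat.mul (by norm_num) hg0]
      congr 1
      rw [show (4 : ℕ) = 2 ^ 2 by norm_num, padicValNat.prime_pow]
    by_cases hm3 : g % 4 = 3
    · rw [if_pos hm3, hmul, padicValNat.eq_zero_of_not_dvd (by omega)]
    · rw [if_neg hm3, hmul]
      have hm2 : g % 4 = 2 := by omega
      have hdvd : 2 ∣ g := by omega
      have hne : padicValNat 2 g ≠ 0 := by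
        intro h0
        rcases padicValNat.eq_zero_iff.mp h0 with h' | h' | h'
        · norm_num at h'
        · exact hg0 h'
        · exact h' hdvd
      omega

lemma nat_sq_ratio {g g' : ℕ} (hg : Squarefree g) (hg' : Squarefree g') (hg0 : 0 < g)
    (hg'0 : 0 < g') (u : ℚ) (h : ((g' : ℚ)) ^ 2 = ((g : ℚ)) ^ 2 * u ^ 4) : g' = g := by
  have hu0 : u ≠ 0 := by
    rintro rfl
    have h0 : ((g' : ℚ)) ^ 2 = 0 := by rw [h]; ring
    have h0' : ((g' : ℚ)) = 0 := by
      have := sq_eq_zero_iff.mp h0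
      exact this
    exact absurd (by exact_mod_cast h0' : g' = 0) (by omega)
  have h2 : ((g' : ℚ)) ^ 2 = ((g : ℚ) * u ^ 2) ^ 2 := by rw [h]; ring
  rcases sq_eq_sq_iff_eq_or_eq_neg.mp h2 with hc | hc
  · have hint : ((g' : ℤ) : ℚ) = ((g : ℤ) : ℚ) * u ^ 2 := by push_cast; push_cast at hc; linarith
    have := int_sqfree_unique (squarefree_int_of_nat hg') (squarefree_int_of_nat hg) u hint
    exact_mod_cast this
  · exfalso
    have hgp : (0 : ℚ) < (g : ℚ) := by exact_mod_cast hg0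
    have hgp' : (0 : ℚ) < (g' : ℚ) := by exact_mod_cast hg'0
    have hup : (0 : ℚ) < u ^ 2 := by positivity
    nlinarith

lemma mk4_pos_inj {n : ℕ} (hn : n = 4) {g g' : ℕ} (hg : Squarefree g) (hg' : Squarefree g')
    (hg0 : 0 < g) (hg'0 : 0 < g')
    (h : (QuotientGroup.mk (natUnit g ^ 2) : ℚˣ ⧸ powSubgroup n) =
      QuotientGroup.mk (natUnit g' ^ 2)) : g = g' := by
  subst hn
  obtain ⟨u, hu⟩ := mk_eq_mk.mp h
  have hc := congrArg Units.val hu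
  simp only [Units.val_mul, Units.val_pow_eq_pow_val, natUnit_coe hg0.ne',
    natUnit_coe hg'0.ne'] at hc
  exact (nat_sq_ratio hg hg' hg0 hg'0 (u : ℚ) hc).symm

lemma mk4_neg_inj {n : ℕ} (hn : n = 4) {g g' : ℕ} (hg : Squarefree g) (hg' : Squarefree g')
    (hg0 : 0 < g) (hg'0 : 0 < g')
    (h : (QuotientGroup.mk (-(natUnit g ^ 2)) : ℚˣ ⧸ powSubgroup n) =
      QuotientGroup.mk (-(natUnit g' ^ 2))) : g = g' := by
  subst hn
  obtain ⟨u, hu⟩ := mk_eq_mk.mp h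
  have hc := congrArg Units.val hu
  simp only [Units.val_mul, Units.val_neg, Units.val_pow_eq_pow_val, natUnit_coe hg0.ne',
    natUnit_coe hg'0.ne'] at hc
  refine (nat_sq_ratio hg hg' hg0 hg'0 (u : ℚ) ?_).symm
  linarith

lemma mk4_mixed {n : ℕ} (hn : n = 4) {g g' : ℕ} (hg0 : 0 < g) (hg'0 : 0 < g') :
    (QuotientGroup.mk (natUnit g ^ 2) : ℚˣ ⧸ powSubgroup n) ≠
      QuotientGroup.mk (-(natUnit g' ^ 2)) := by
  subst hn
  intro h
  obtain ⟨u, hu⟩ := mk_eq_mk.mp h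
  have hc := congrArg Units.val hu
  simp only [Units.val_mul, Units.val_neg, Units.val_pow_eq_pow_val, natUnit_coe hg0.ne',
    natUnit_coe hg'0.ne'] at hc
  have hgp : (0 : ℚ) < (g : ℚ) := by exact_mod_cast hg0
  have hgp' : (0 : ℚ) < (g' : ℚ) := by exact_mod_cast hg'0
  have hune : ((u : ℚ)) ≠ 0 := u.ne_zero
  have hup : (0 : ℚ) < ((u : ℚ)) ^ 4 := by positivity
  nlinarith

lemma mk4_pos_ne_one {n : ℕ} (hn : n = 4) {g : ℕ} (hg : Squarefree g) (h1 : 1 < g) :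
    (QuotientGroup.mk (natUnit g ^ 2) : ℚˣ ⧸ powSubgroup n) ≠ 1 := by
  subst hn
  intro h
  obtain ⟨u, hu⟩ := (QuotientGroup.eq_one_iff _).mp h
  rw [powMonoidHom_apply] at hu
  have hc := congrArg Units.val hu
  simp only [Units.val_pow_eq_pow_val, natUnit_coe (by omega : g ≠ 0)] at hc
  have h2 : (((u : ℚ)) ^ 2) ^ 2 = ((g : ℚ)) ^ 2 := by rw [← hc]; ring
  rcases sq_eq_sq_iff_eq_or_eq_neg.mp h2 with hcase | hcase
  · have := eq_one_of_sq_eq (squarefree_int_of_nat hg) ((u : ℚ)) (by push_cast; exact hcase)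
    have hg1 : g = 1 := by exact_mod_cast this
    omega
  · have hgp : (0 : ℚ) < (g : ℚ) := by exact_mod_cast (by omega : 0 < g)
    nlinarith [sq_nonneg ((u : ℚ))]


lemma neg_natUnit {g : ℕ} (hg : g ≠ 0) : -(natUnit g) = intUnit (-(g : ℤ)) := by
  have hne : -(g : ℤ) ≠ 0 := by
    simp only [neg_ne_zero]
    exact_mod_cast hg
  refine Units.ext ?_
  rw [Units.val_neg, natUnit_coe hg, intUnit_coe hne]
  push_cast
  ring

lemma aux0 (Γ : Subgroup ℚˣ) (v : ℕ) (hv : v = 0) :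
    {c : ℚˣ ⧸ powSubgroup (2 ^ v) | c ∈ GammaMod Γ (2 ^ v) ∧ c ^ 2 = 1 ∧
      (if IsPosClass (2 ^ v) c then padicValNat 2 (deltaClass (2 ^ v) c) ≤ v
       else padicValNat 2 (deltaClass (2 ^ v) c) = v + 1)} = {1} := by
  subst hv
  ext c
  simp only [Set.mem_setOf_eq, Set.mem_singleton_iff]
  have hc1 : c = 1 := by
    induction c using QuotientGroup.induction_on with
    | H x => exact (QuotientGroup.eq_one_iff x).mpr ⟨x, by rw [powMonoidHom_apply]; norm_num⟩
  subst hc1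
  constructor
  · intro _; rfl
  · rintro -
    refine ⟨(GammaMod Γ _).one_mem, one_pow 2, ?_⟩
    have hpos : IsPosClass (2 ^ 0) (1 : ℚˣ ⧸ powSubgroup (2 ^ 0)) := by
      refine ⟨1, rfl, ?_⟩
      norm_num
    rw [if_pos hpos, deltaClass_one]
    simp

lemma aux3 (Γ : Subgroup ℚˣ) (v : ℕ) (hv : 3 ≤ v) :
    {c : ℚˣ ⧸ powSubgroup (2 ^ v) | c ∈ GammaMod Γ (2 ^ v) ∧ c ^ 2 = 1 ∧
      (if IsPosClass (2 ^ v) c then padicValNat 2 (deltaClass (2 ^ v) c) ≤ v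
       else padicValNat 2 (deltaClass (2 ^ v) c) = v + 1)} =
    {c | c ∈ GammaMod Γ (2 ^ v) ∧ c ^ 2 = 1 ∧ IsPosClass (2 ^ v) c} := by
  ext c
  simp only [Set.mem_setOf_eq]
  have hb := deltaClass_v2_le (2 ^ v) c
  constructor
  · rintro ⟨h1, h2, h3⟩
    refine ⟨h1, h2, ?_⟩
    by_contra hp
    rw [if_neg hp] at h3
    omega
  · rintro ⟨h1, h2, hp⟩
    exact ⟨h1, h2, by rw [if_pos hp]; omega⟩


lemma int_squarefree_neg {a : ℤ} (h : Squarefree a) : Squarefree (-a) := by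
  rw [← Int.squarefree_natAbs] at h ⊢
  simpa using h

lemma pow_half_two {n : ℕ} (hn : n = 2) (g : ℕ) :
    natUnit g ^ (n / 2) = intUnit (g : ℤ) := by
  subst hn
  norm_num [natUnit_eq_intUnit]

lemma pow_half_two_neg {n : ℕ} (hn : n = 2) (g : ℕ) (hg : g ≠ 0) :
    -(natUnit g ^ (n / 2)) = intUnit (-(g : ℤ)) := by
  subst hn
  rw [show (2 : ℕ) / 2 = 1 from rfl, pow_one]
  exact neg_natUnit hg

lemma aux1 (Γ : Subgroup ℚˣ) (v : ℕ) (hv : v = 1) :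
    {c : ℚˣ ⧸ powSubgroup (2 ^ v) | c ∈ GammaMod Γ (2 ^ v) ∧ c ^ 2 = 1 ∧
      (if IsPosClass (2 ^ v) c then padicValNat 2 (deltaClass (2 ^ v) c) ≤ v
       else padicValNat 2 (deltaClass (2 ^ v) c) = v + 1)} =
    {c | c ∈ GammaMod Γ (2 ^ v) ∧ ∃ b : ℤ, Squarefree b ∧
      (QuotientGroup.mk (intUnit b) : ℚˣ ⧸ powSubgroup (2 ^ v)) = c ∧ b % 4 = 1} := by
  subst hv
  have hn2 : (2 : ℕ) ^ 1 = 2 := by norm_num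
  have heven : Even ((2 : ℕ) ^ 1) := by decide
  have hexp : ((2 : ℕ) ^ 1) / 2 = 1 := by norm_num
  ext c
  simp only [Set.mem_setOf_eq]
  induction c using QuotientGroup.induction_on with
  | H x =>
  obtain ⟨b, hbsf, hbmk⟩ := exists_intUnit_mk hn2 x
  have hb0 : b ≠ 0 := hbsf.ne_zero
  have hcond : (if IsPosClass (2 ^ 1) (QuotientGroup.mk x) then
        padicValNat 2 (deltaClass (2 ^ 1) (QuotientGroup.mk x)) ≤ 1
      else padicValNat 2 (deltaClass (2 ^ 1) (QuotientGroup.mk x)) = 1 + 1) ↔ b % 4 = 1 := by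
    rw [← hbmk]
    have hcoe : ((intUnit b : ℚˣ) : ℚ) = (b : ℚ) := intUnit_coe hb0
    rcases lt_trichotomy b 0 with hneg | h0 | hposb
    · -- b < 0 : class is negative
      have hgb : ((b.natAbs : ℤ)) = -b := Int.ofNat_natAbs_of_nonpos (le_of_lt hneg)
      have hbneg : ((intUnit b : ℚˣ) : ℚ) < 0 := by rw [hcoe]; exact_mod_cast hneg
      have hnp := not_isPosClass_of_neg heven hbneg
      have hne1 := mk_ne_one_of_neg heven hbneg
      have hgsf : Squarefree b.natAbs := Int.squarefree_natAbs.mpr hbsf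
      rw [if_neg hnp]
      by_cases hb1 : b = -1
      · have hδ : deltaClass (2 ^ 1) (QuotientGroup.mk (intUnit b)) = 1 := by
          refine deltaClass_eq_one_of hne1 ?_
          rintro ⟨g', hg'sf, hg'1, hrep | hrep⟩
          · rw [pow_half_two hn2 g'] at hrep
            have := intUnit_mk_inj hn2 (squarefree_int_of_nat hg'sf) hbsf hrep
            omega
          · rw [pow_half_two_neg hn2 g' (by omega : g' ≠ 0)] at hrep
            have := intUnit_mk_inj hn2 (int_squarefree_neg (squarefree_int_of_nat hg'sf))
              hbsf hrep
            omega
        rw [hδ, padicValNat.one]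
        omega
      · have hg1 : 1 < b.natAbs := by omega
        have hδ : deltaClass (2 ^ 1) (QuotientGroup.mk (intUnit b)) =
            if b.natAbs % 4 = 1 then b.natAbs else 4 * b.natAbs := by
          refine deltaClass_eq_of hne1 hgsf hg1 (Or.inr ?_) ?_
          · rw [pow_half_two_neg hn2 b.natAbs (by omega : b.natAbs ≠ 0),
              show -(b.natAbs : ℤ) = b by omega]
          · rintro g' hg'sf hg'1 (hrep | hrep)
            · rw [pow_half_two hn2 g'] at hrep
              have := intUnit_mk_inj hn2 (squarefree_int_of_nat hg'sf) hbsf hrep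
              omega
            · rw [pow_half_two_neg hn2 g' (by omega : g' ≠ 0)] at hrep
              have := intUnit_mk_inj hn2 (int_squarefree_neg (squarefree_int_of_nat hg'sf))
                hbsf hrep
              omega
        rw [hδ, v2_delta_if hgsf hg1]
        split_ifs with h1 h3 <;>
          [skip; skip; skip] <;>
          (try simp only [false_iff, true_iff, iff_false, iff_true]) <;> omega
    · exact absurd h0 hb0
    · -- b > 0 : class is positive
      have hgb : ((b.natAbs : ℤ)) = b := Int.natAbs_of_nonneg (le_of_lt hposb)
      have hp : IsPosClass (2 ^ 1) (QuotientGroup.mk (intUnit b)) := by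
        rw [isPosClass_mk_iff heven, hcoe]
        exact_mod_cast hposb
      have hgsf : Squarefree b.natAbs := Int.squarefree_natAbs.mpr hbsf
      rw [if_pos hp]
      by_cases hb1 : b = 1
      · have hone : intUnit b = 1 := by
          refine Units.ext ?_
          rw [hcoe, hb1]
          norm_num
        have h1q : (QuotientGroup.mk (intUnit b) : ℚˣ ⧸ powSubgroup (2 ^ 1)) = 1 := by
          rw [hone]
          rfl
        rw [h1q, deltaClass_one, padicValNat.one]
        omega
      · have hg1 : 1 < b.natAbs := by omega
        have hne1 : (QuotientGroup.mk (intUnit b) : ℚˣ ⧸ powSubgroup (2 ^ 1)) ≠ 1 :=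
          mk_pos_ne_one hn2 hbsf (by omega)
        have hδ : deltaClass (2 ^ 1) (QuotientGroup.mk (intUnit b)) =
            if b.natAbs % 4 = 1 then b.natAbs else 4 * b.natAbs := by
          refine deltaClass_eq_of hne1 hgsf hg1 (Or.inl ?_) ?_
          · rw [pow_half_two hn2 b.natAbs, hgb]
          · rintro g' hg'sf hg'1 (hrep | hrep)
            · rw [pow_half_two hn2 g'] at hrep
              have := intUnit_mk_inj hn2 (squarefree_int_of_nat hg'sf) hbsf hrep
              omega
            · rw [pow_half_two_neg hn2 g' (by omega : g' ≠ 0)] at hrep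
              have := intUnit_mk_inj hn2 (int_squarefree_neg (squarefree_int_of_nat hg'sf))
                hbsf hrep
              omega
        rw [hδ, v2_delta_if hgsf hg1]
        split_ifs with h1 h3 <;>
          [skip; skip; skip] <;>
          (try simp only [false_iff, true_iff, iff_false, iff_true]) <;> omega
  constructor
  · rintro ⟨h1, -, h3⟩
    exact ⟨h1, b, hbsf, hbmk, hcond.mp h3⟩
  · rintro ⟨h1, b', hb'sf, hb'mk, hb'4⟩
    refine ⟨h1, sq_class_eq_one hn2 _, ?_⟩
    have hbb : b' = b := intUnit_mk_inj hn2 hb'sf hbsf (hb'mk.trans hbmk.symm)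
    exact hcond.mpr (hbb ▸ hb'4)


lemma pow_half_four {n : ℕ} (hn : n = 4) (g : ℕ) :
    natUnit g ^ (n / 2) = natUnit g ^ 2 := by subst hn; rfl

lemma mk4_torsion {n : ℕ} (hn : n = 4) (y : ℚˣ) (g : ℕ)
    (h : y = natUnit g ^ 2 ∨ y = -(natUnit g ^ 2)) :
    (QuotientGroup.mk y : ℚˣ ⧸ powSubgroup n) ^ 2 = 1 := by
  subst hn
  have hy : ((QuotientGroup.mk (y ^ 2) : ℚˣ ⧸ powSubgroup 4)) = 1 := by
    rw [QuotientGroup.eq_one_iff]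
    refine ⟨natUnit g, ?_⟩
    rw [powMonoidHom_apply]
    rcases h with rfl | rfl
    · rw [← pow_mul]
    · rw [neg_sq, ← pow_mul]
  exact hy

lemma aux2 (Γ : Subgroup ℚˣ) (v : ℕ) (hv : v = 2) :
    {c : ℚˣ ⧸ powSubgroup (2 ^ v) | c ∈ GammaMod Γ (2 ^ v) ∧ c ^ 2 = 1 ∧
      (if IsPosClass (2 ^ v) c then padicValNat 2 (deltaClass (2 ^ v) c) ≤ v
       else padicValNat 2 (deltaClass (2 ^ v) c) = v + 1)} =
    {c | c ∈ GammaMod Γ (2 ^ v) ∧ ∃ g : ℕ, Squarefree g ∧ 0 < g ∧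
      ((¬ 2 ∣ g ∧ (QuotientGroup.mk (natUnit g ^ 2) : ℚˣ ⧸ powSubgroup (2 ^ v)) = c) ∨
       (2 ∣ g ∧ (QuotientGroup.mk (-(natUnit g ^ 2)) : ℚˣ ⧸ powSubgroup (2 ^ v)) = c))} := by
  subst hv
  have hn4 : (2 : ℕ) ^ 2 = 4 := by norm_num
  have heven : Even ((2 : ℕ) ^ 2) := by decide
  ext c
  simp only [Set.mem_setOf_eq]
  induction c using QuotientGroup.induction_on with
  | H x =>
  by_cases hsq : (QuotientGroup.mk x : ℚˣ ⧸ powSubgroup (2 ^ 2)) ^ 2 = 1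
  swap
  · constructor
    · rintro ⟨-, h2, -⟩
      exact absurd h2 hsq
    · rintro ⟨-, g, -, hgpos, ⟨-, hmk⟩ | ⟨-, hmk⟩⟩
      · exact absurd (hmk ▸ mk4_torsion hn4 _ g (Or.inl rfl)) hsq
      · exact absurd (hmk ▸ mk4_torsion hn4 _ g (Or.inr rfl)) hsq
  obtain ⟨g, hgsf, hgpos, u, hcase⟩ := sq_torsion_rep hn4 x hsq
  have h4g : ¬ ((2 * 2 : ℕ) ∣ g) := fun hd => absurd (hgsf 2 hd) (by norm_num)
  rcases hcase with hx | hx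
  · -- positive class
    have hceq : (QuotientGroup.mk (natUnit g ^ 2) : ℚˣ ⧸ powSubgroup (2 ^ 2)) =
        QuotientGroup.mk x := mk_eq_mk.mpr ⟨u, by rw [hx]; norm_num⟩
    rw [← hceq]
    have htor : ((QuotientGroup.mk (natUnit g ^ 2) : ℚˣ ⧸ powSubgroup (2 ^ 2))) ^ 2 = 1 :=
      mk4_torsion hn4 _ g (Or.inl rfl)
    have hcoeA : ((natUnit g ^ 2 : ℚˣ) : ℚ) = ((g : ℚ)) ^ 2 := by
      rw [Units.val_pow_eq_pow_val, natUnit_coe hgpos.ne']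
    have hpos : IsPosClass (2 ^ 2) (QuotientGroup.mk (natUnit g ^ 2)) := by
      rw [isPosClass_mk_iff heven, hcoeA]
      positivity
    have hcond : (if IsPosClass (2 ^ 2) (QuotientGroup.mk (natUnit g ^ 2)) then
          padicValNat 2 (deltaClass (2 ^ 2) (QuotientGroup.mk (natUnit g ^ 2))) ≤ 2
        else padicValNat 2 (deltaClass (2 ^ 2) (QuotientGroup.mk (natUnit g ^ 2))) = 2 + 1) ↔
        ¬ 2 ∣ g := by
      rw [if_pos hpos]
      by_cases hg1 : g = 1
      · have hA1 : (QuotientGroup.mk (natUnit g ^ 2) : ℚˣ ⧸ powSubgroup (2 ^ 2)) = 1 := by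
          subst hg1
          have : natUnit 1 = 1 := Units.ext (by rw [natUnit_coe one_ne_zero]; norm_num)
          rw [this, one_pow]
          rfl
        rw [hA1, deltaClass_one, padicValNat.one]
        constructor
        · intro _
          omega
        · intro _
          omega
      · have hg1' : 1 < g := by omega
        have hne1 : (QuotientGroup.mk (natUnit g ^ 2) : ℚˣ ⧸ powSubgroup (2 ^ 2)) ≠ 1 :=
          mk4_pos_ne_one hn4 hgsf hg1'
        have hδ : deltaClass (2 ^ 2) (QuotientGroup.mk (natUnit g ^ 2)) =
            if g % 4 = 1 then g else 4 * g := by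
          refine deltaClass_eq_of hne1 hgsf hg1' (Or.inl (by rw [pow_half_four hn4 g])) ?_
          rintro g' hg'sf hg'1 (hrep | hrep) <;> rw [pow_half_four hn4 g'] at hrep
          · exact mk4_pos_inj hn4 hg'sf hgsf (by omega) hgpos hrep
          · exact absurd hrep.symm (mk4_mixed hn4 hgpos (by omega))
        rw [hδ, v2_delta_if hgsf hg1']
        split_ifs with h1 h3 <;>
          (try simp only [false_iff, true_iff, iff_false, iff_true]) <;> omega
    constructor
    · rintro ⟨h1, -, h3⟩
      exact ⟨h1, g, hgsf, hgpos, Or.inl ⟨hcond.mp h3, rfl⟩⟩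
    · rintro ⟨h1, g', hg'sf, hg'pos, ⟨hodd, hmk⟩ | ⟨hev, hmk⟩⟩
      · have hgg : g' = g := mk4_pos_inj hn4 hg'sf hgsf hg'pos hgpos hmk
        exact ⟨h1, htor, hcond.mpr (hgg ▸ hodd)⟩
      · exact absurd hmk.symm (mk4_mixed hn4 hgpos hg'pos)
  · -- negative class
    have hceq : (QuotientGroup.mk (-(natUnit g ^ 2)) : ℚˣ ⧸ powSubgroup (2 ^ 2)) =
        QuotientGroup.mk x := mk_eq_mk.mpr ⟨u, by rw [hx]; norm_num⟩
    rw [← hceq]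
    have htor : ((QuotientGroup.mk (-(natUnit g ^ 2)) : ℚˣ ⧸ powSubgroup (2 ^ 2))) ^ 2 = 1 :=
      mk4_torsion hn4 _ g (Or.inr rfl)
    have hcoeA : ((-(natUnit g ^ 2) : ℚˣ) : ℚ) = -((g : ℚ)) ^ 2 := by
      rw [Units.val_neg, Units.val_pow_eq_pow_val, natUnit_coe hgpos.ne']
    have hAneg : ((-(natUnit g ^ 2) : ℚˣ) : ℚ) < 0 := by
      rw [hcoeA]
      have : (0 : ℚ) < (g : ℚ) := by exact_mod_cast hgpos
      nlinarith
    have hnp := not_isPosClass_of_neg heven hAneg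
    have hne1 := mk_ne_one_of_neg heven hAneg
    have hcond : (if IsPosClass (2 ^ 2) (QuotientGroup.mk (-(natUnit g ^ 2))) then
          padicValNat 2 (deltaClass (2 ^ 2) (QuotientGroup.mk (-(natUnit g ^ 2)))) ≤ 2
        else padicValNat 2 (deltaClass (2 ^ 2) (QuotientGroup.mk (-(natUnit g ^ 2)))) = 2 + 1) ↔
        2 ∣ g := by
      rw [if_neg hnp]
      by_cases hg1 : g = 1
      · have hδ : deltaClass (2 ^ 2) (QuotientGroup.mk (-(natUnit g ^ 2))) = 1 := by
          refine deltaClass_eq_one_of hne1 ?_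
          rintro ⟨g', hg'sf, hg'1, hrep | hrep⟩ <;> rw [pow_half_four hn4 g'] at hrep
          · exact absurd hrep (mk4_mixed hn4 (by omega) hgpos)
          · have := mk4_neg_inj hn4 hg'sf hgsf (by omega) hgpos hrep
            omega
        rw [hδ, padicValNat.one]
        constructor
        · intro h
          omega
        · intro h
          omega
      · have hg1' : 1 < g := by omega
        have hδ : deltaClass (2 ^ 2) (QuotientGroup.mk (-(natUnit g ^ 2))) =
            if g % 4 = 1 then g else 4 * g := by
          refine deltaClass_eq_of hne1 hgsf hg1' (Or.inr (by rw [pow_half_four hn4 g])) ?_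
          rintro g' hg'sf hg'1 (hrep | hrep) <;> rw [pow_half_four hn4 g'] at hrep
          · exact absurd hrep (mk4_mixed hn4 (by omega) hgpos)
          · exact mk4_neg_inj hn4 hg'sf hgsf (by omega) hgpos hrep
        rw [hδ, v2_delta_if hgsf hg1']
        split_ifs with h1 h3 <;>
          (try simp only [false_iff, true_iff, iff_false, iff_true]) <;> omega
    constructor
    · rintro ⟨h1, -, h3⟩
      exact ⟨h1, g, hgsf, hgpos, Or.inr ⟨hcond.mp h3, rfl⟩⟩
    · rintro ⟨h1, g', hg'sf, hg'pos, ⟨hodd, hmk⟩ | ⟨hev, hmk⟩⟩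
      · exact absurd hmk (mk4_mixed hn4 hg'pos hgpos)
      · have hgg : g' = g := mk4_neg_inj hn4 hg'sf hgsf hg'pos hgpos hmk
        exact ⟨h1, htor, hcond.mpr (hgg ▸ hev)⟩


/-- **Explicit description of `tildeΓ(m)`** according to `v₂(m)`. -/
theorem tildeGamma_description (Γ : Subgroup ℚˣ) (hFG : Γ.FG) (m : ℕ) (hm : 1 ≤ m) :
    (¬ 2 ∣ m → tildeGamma Γ m = {1}) ∧
    (padicValNat 2 m = 1 →
      tildeGamma Γ m = {c | c ∈ GammaMod Γ (2 ^ padicValNat 2 m) ∧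
        ∃ b : ℤ, Squarefree b ∧
          (QuotientGroup.mk (intUnit b) : ℚˣ ⧸ powSubgroup (2 ^ padicValNat 2 m)) = c ∧
          b % 4 = 1}) ∧
    (padicValNat 2 m = 2 →
      tildeGamma Γ m = {c | c ∈ GammaMod Γ (2 ^ padicValNat 2 m) ∧
        ∃ g : ℕ, Squarefree g ∧ 0 < g ∧
          ((¬ 2 ∣ g ∧
            (QuotientGroup.mk (natUnit g ^ 2) : ℚˣ ⧸ powSubgroup (2 ^ padicValNat 2 m)) = c) ∨
           (2 ∣ g ∧
            (QuotientGroup.mk (-(natUnit g ^ 2)) : ℚˣ ⧸ powSubgroup (2 ^ padicValNat 2 m)) = c))}) ∧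
    (3 ≤ padicValNat 2 m →
      tildeGamma Γ m = {c | c ∈ GammaMod Γ (2 ^ padicValNat 2 m) ∧ c ^ 2 = 1 ∧
        IsPosClass (2 ^ padicValNat 2 m) c}) := by
  refine ⟨fun h => ?_, fun h => ?_, fun h => ?_, fun h => ?_⟩
  · exact aux0 Γ (padicValNat 2 m) (padicValNat.eq_zero_of_not_dvd h)
  · exact aux1 Γ (padicValNat 2 m) h
  · exact aux2 Γ (padicValNat 2 m) h
  · exact aux3 Γ (padicValNat 2 m) h
end

section
/- For any finitely generated subgroup Γ ⊂ ℚ* and any integer m ≥ 1, the set tildeΓ(m) is a subgroup of the 2-torsion group Γ(m₂)[2]; in particular its order |tildeΓ(m)| is a power of 2. -/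
/- Common definitions: finitely generated multiplicative subgroups `Γ ⊆ ℚˣ`,
the quotients `Γ(n) = Γ·(ℚ*)ⁿ/(ℚ*)ⁿ`, the invariants `δ(γ)`, the group `tildeΓ(m)`,
the constants `A(Γ,m)` and `B_{Γ,k}`, and the density `ρ(Γ,m)`. -/

open scoped Classical

noncomputable section TGaux

namespace TGaux

lemma mem_powSubgroup {n : ℕ} {x : ℚˣ} : x ∈ powSubgroup n ↔ ∃ y : ℚˣ, y ^ n = x := by
  simp [powSubgroup, MonoidHom.mem_range, powMonoidHom_apply]

lemma natUnit_val {g : ℕ} (hg : g ≠ 0) : ((natUnit g : ℚˣ) : ℚ) = g := by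
  have h : ((g : ℤ) : ℚ) ≠ 0 := by exact_mod_cast Nat.cast_ne_zero.mpr hg
  simp only [natUnit, intUnit, dif_neg h, Units.val_mk0]
  push_cast; ring

lemma natUnit_pow_val {g : ℕ} (hg : g ≠ 0) (k : ℕ) :
    ((natUnit g ^ k : ℚˣ) : ℚ) = (g : ℚ) ^ k := by
  rw [Units.val_pow_eq_pow_val, natUnit_val hg]

lemma even_two_pow {α : ℕ} (hα : 0 < α) : Even (2 ^ α) := by
  obtain ⟨β, rfl⟩ := Nat.exists_eq_add_of_lt hα
  exact ⟨2 ^ (β), by rw [zero_add, pow_succ]; ring⟩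

lemma pos_of_mem_pow {α : ℕ} (hα : 0 < α) {x : ℚˣ} (hx : x ∈ powSubgroup (2 ^ α)) :
    0 < (x : ℚ) := by
  obtain ⟨y, hy⟩ := mem_powSubgroup.mp hx
  have h : ((y : ℚ)) ^ (2 ^ α) = (x : ℚ) := by rw [← Units.val_pow_eq_pow_val, hy]
  rw [← h]
  exact (even_two_pow hα).pow_pos (Units.ne_zero y)

lemma sign_helper {a b : ℚ} (ha : a ≠ 0) (h : 0 < a⁻¹ * b) : 0 < a ↔ 0 < b := by
  have hb : b = a * (a⁻¹ * b) := by field_simp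
  constructor
  · intro h0; rw [hb]; exact mul_pos h0 h
  · intro h0
    rcases ha.lt_or_gt with h1 | h1
    · exfalso; rw [hb] at h0; nlinarith
    · exact h1

lemma pos_iff_of_mk_eq {α : ℕ} (hα : 0 < α) {x y : ℚˣ}
    (h : (QuotientGroup.mk x : ℚˣ ⧸ powSubgroup (2 ^ α)) = QuotientGroup.mk y) :
    (0 < (x : ℚ) ↔ 0 < (y : ℚ)) := by
  rw [QuotientGroup.eq] at h
  have hp := pos_of_mem_pow hα h
  rw [Units.val_mul, Units.val_inv_eq_inv_val] at hp
  exact sign_helper (Units.ne_zero x) hp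

lemma isPosClass_iff {α : ℕ} (hα : 0 < α) (x : ℚˣ) :
    IsPosClass (2 ^ α) (QuotientGroup.mk x) ↔ 0 < (x : ℚ) := by
  constructor
  · rintro ⟨z, hz, hzpos⟩; exact (pos_iff_of_mk_eq hα hz).mp hzpos
  · exact fun h => ⟨x, rfl, h⟩

lemma mk_eq_of_val {n : ℕ} {x z : ℚˣ} {t : ℚ} (ht : t ≠ 0) (h : (x : ℚ) = (z : ℚ) * t ^ n) :
    (QuotientGroup.mk x : ℚˣ ⧸ powSubgroup n) = QuotientGroup.mk z := by
  rw [QuotientGroup.eq]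
  refine mem_powSubgroup.mpr ⟨(Units.mk0 t ht)⁻¹, ?_⟩
  apply Units.ext
  have hz : (z : ℚ) ≠ 0 := Units.ne_zero z
  have htn : t ^ n ≠ 0 := pow_ne_zero _ ht
  rw [Units.val_pow_eq_pow_val, Units.val_mul, Units.val_inv_eq_inv_val,
    Units.val_inv_eq_inv_val, Units.val_mk0, h]
  rw [inv_pow]
  field_simp


lemma rat_decomp {q : ℚ} (hq : q ≠ 0) :
    ∃ (g : ℕ) (t : ℚ), Squarefree g ∧ 0 < g ∧ t ≠ 0 ∧
      (q = (g : ℚ) * t ^ 2 ∨ q = -((g : ℚ) * t ^ 2)) := by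
  have hnum : q.num ≠ 0 := Rat.num_ne_zero.mpr hq
  have hden : (0 : ℚ) < (q.den : ℚ) := by exact_mod_cast q.pos
  have hN0 : 0 < (q.num * (q.den : ℤ)).natAbs := by
    apply Int.natAbs_pos.mpr
    exact mul_ne_zero hnum (by exact_mod_cast q.den_nz)
  obtain ⟨a, b, ha, hb, hab, hsq⟩ := Nat.sq_mul_squarefree_of_pos hN0
  refine ⟨a, (b : ℚ) / (q.den : ℚ), hsq, ha, ?_, ?_⟩
  · apply div_ne_zero _ hden.ne'
    exact_mod_cast hb.ne'
  · have key : (a : ℚ) * ((b : ℚ) / (q.den : ℚ)) ^ 2 = |q| := by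
      have h1 : ((b ^ 2 * a : ℕ) : ℚ) = |(q.num : ℚ) * (q.den : ℚ)| := by
        rw [hab]
        push_cast [Nat.cast_natAbs]
        simp [abs_mul]
      have h2 : |q| = |(q.num : ℚ)| / (q.den : ℚ) := by
        rw [← Rat.num_div_den q, abs_div, abs_of_pos hden]
        rw [Rat.num_div_den q]
      rw [h2]
      rw [abs_mul, abs_of_pos hden] at h1
      push_cast at h1
      field_simp
      nlinarith [h1]
    rcases abs_choice q with h | h
    · left; rw [key, h]
    · right; rw [key, h]; ring

def sgn (ε : Bool) : ℚˣ := if ε then 1 else -1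

lemma sgn_val (ε : Bool) : ((sgn ε : ℚˣ) : ℚ) = if ε then 1 else -1 := by
  cases ε <;> simp [sgn]

lemma nf_val (ε : Bool) {g : ℕ} (hg : g ≠ 0) (k : ℕ) :
    ((sgn ε * natUnit g ^ k : ℚˣ) : ℚ) = (if ε then 1 else -1) * (g : ℚ) ^ k := by
  rw [Units.val_mul, natUnit_pow_val hg, sgn_val]

lemma pos_pow_eq_one {b : ℚ} (hb : 0 < b) {k : ℕ} (hk : k ≠ 0) (h : b ^ k = 1) : b = 1 := by
  rcases lt_trichotomy b 1 with h1 | h1 | h1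
  · exfalso; have := pow_lt_one₀ hb.le h1 hk; rw [h] at this; exact lt_irrefl 1 this
  · exact h1
  · exfalso; have := one_lt_pow₀ h1 hk; rw [h] at this; exact lt_irrefl 1 this

lemma two_pow_div_two {α : ℕ} (hα : 0 < α) : 2 ^ α / 2 = 2 ^ (α - 1) ∧ 2 ^ α = 2 * 2 ^ (α - 1) := by
  obtain ⟨β, rfl⟩ := Nat.exists_eq_add_of_lt hα
  simp only [zero_add, Nat.add_sub_cancel]
  constructor
  · rw [pow_succ, Nat.mul_div_cancel _ two_pos]
  · rw [pow_succ]; ring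

lemma exists_nf {α : ℕ} (hα : 0 < α) (c : ℚˣ ⧸ powSubgroup (2 ^ α)) (hc : c ^ 2 = 1) :
    ∃ (ε : Bool) (g : ℕ), Squarefree g ∧ 0 < g ∧
      c = QuotientGroup.mk (sgn ε * natUnit g ^ (2 ^ α / 2)) := by
  obtain ⟨x, rfl⟩ := QuotientGroup.mk_surjective c
  obtain ⟨hk, h2k⟩ := two_pow_div_two hα
  set k := 2 ^ (α - 1) with hkdef
  have hx2 : x ^ 2 ∈ powSubgroup (2 ^ α) := by
    rw [← QuotientGroup.eq_one_iff, QuotientGroup.mk_pow]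
    exact hc
  obtain ⟨y, hy⟩ := mem_powSubgroup.mp hx2
  have hval : ((x : ℚ)) ^ 2 = ((y : ℚ)) ^ (2 ^ α) := by
    rw [← Units.val_pow_eq_pow_val, ← Units.val_pow_eq_pow_val, hy]
  obtain ⟨g, t, hsq, hg0, ht, hyd⟩ := rat_decomp (Units.ne_zero y)
  -- (x:ℚ) = ± ((y:ℚ))^k
  have hxpm : (x : ℚ) = ((y : ℚ)) ^ k ∨ (x : ℚ) = -(((y : ℚ)) ^ k) := by
    have h1 : ((x : ℚ)) ^ 2 = (((y : ℚ)) ^ k) ^ 2 := by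
      rw [hval, ← pow_mul, h2k]; ring_nf
    rcases sq_eq_sq_iff_eq_or_eq_neg.mp h1 with h | h
    · left; exact h
    · right; rw [h]
  have key : ∃ s : ℚ, (s = 1 ∨ s = -1) ∧ (x : ℚ) = s * (g : ℚ) ^ k * t ^ (2 ^ α) := by
    have hyk : ∃ s' : ℚ, (s' = 1 ∨ s' = -1) ∧
        ((y : ℚ)) ^ k = s' * (g : ℚ) ^ k * t ^ (2 ^ α) := by
      rcases hyd with h | h
      · exact ⟨1, Or.inl rfl, by rw [h, mul_pow, ← pow_mul, ← h2k]; ring⟩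
      · refine ⟨(-1 : ℚ) ^ k, ?_, ?_⟩
        · rcases Nat.even_or_odd k with he | he
          · left; exact he.neg_one_pow
          · right; exact he.neg_one_pow
        · rw [h]
          rw [show -((g : ℚ) * t ^ 2) = (-1) * ((g : ℚ) * t ^ 2) by ring]
          rw [mul_pow, mul_pow, ← pow_mul, ← h2k]
          ring
    obtain ⟨s', hs', hrw⟩ := hyk
    rcases hxpm with h | h
    · exact ⟨s', hs', by rw [h, hrw]⟩
    · refine ⟨-s', ?_, by rw [h, hrw]; ring⟩
      rcases hs' with h' | h'
      · right; rw [h']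
      · left; rw [h']; ring
  obtain ⟨s, hs, hxv⟩ := key
  have hgne : g ≠ 0 := hg0.ne'
  rcases hs with rfl | rfl
  · refine ⟨true, g, hsq, hg0, ?_⟩
    apply mk_eq_of_val ht
    rw [nf_val true hgne, hk, hxv]
    norm_num
  · refine ⟨false, g, hsq, hg0, ?_⟩
    apply mk_eq_of_val ht
    rw [nf_val false hgne, hk, hxv]
    norm_num


lemma sqf_eq {g₁ g₂ : ℕ} (h₁ : Squarefree g₁) (h₂ : Squarefree g₂) {y : ℚ} (hy : y ≠ 0)
    (h : (g₂ : ℚ) = (g₁ : ℚ) * y ^ 2) : g₁ = g₂ := by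
  apply Nat.eq_of_factorization_eq h₁.ne_zero h₂.ne_zero
  intro p
  by_cases hp : p.Prime
  · haveI : Fact p.Prime := ⟨hp⟩
    have hg₁ : ((g₁ : ℚ)) ≠ 0 := by exact_mod_cast h₁.ne_zero
    have hv : padicValRat p (g₂ : ℚ) = padicValRat p (g₁ : ℚ) + 2 * padicValRat p y := by
      rw [h, padicValRat.mul hg₁ (pow_ne_zero _ hy), padicValRat.pow y]
      push_cast; ring
    rw [padicValRat.of_nat, padicValRat.of_nat] at hv
    have e₁ : g₁.factorization p = padicValNat p g₁ := Nat.factorization_def _ hp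
    have e₂ : g₂.factorization p = padicValNat p g₂ := Nat.factorization_def _ hp
    have l₁ : g₁.factorization p ≤ 1 := h₁.natFactorization_le_one p
    have l₂ : g₂.factorization p ≤ 1 := h₂.natFactorization_le_one p
    rw [e₁, e₂] at *
    omega
  · simp [Nat.factorization_eq_zero_of_not_prime _ hp]

lemma nf_inj {α : ℕ} (hα : 0 < α) {ε₁ ε₂ : Bool} {g₁ g₂ : ℕ}
    (h₁ : Squarefree g₁) (h₂ : Squarefree g₂) (hp₁ : 0 < g₁) (hp₂ : 0 < g₂)
    (h : (QuotientGroup.mk (sgn ε₁ * natUnit g₁ ^ (2 ^ α / 2)) : ℚˣ ⧸ powSubgroup (2 ^ α)) =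
         QuotientGroup.mk (sgn ε₂ * natUnit g₂ ^ (2 ^ α / 2))) :
    ε₁ = ε₂ ∧ g₁ = g₂ := by
  obtain ⟨hk, h2k⟩ := two_pow_div_two hα
  set k := 2 ^ (α - 1) with hkdef
  have hk0 : k ≠ 0 := by positivity
  rw [QuotientGroup.eq] at h
  obtain ⟨y, hy⟩ := mem_powSubgroup.mp h
  have hne : ((sgn ε₁ * natUnit g₁ ^ (2 ^ α / 2) : ℚˣ) : ℚ) ≠ 0 := Units.ne_zero _
  have hval : ((sgn ε₂ * natUnit g₂ ^ (2 ^ α / 2) : ℚˣ) : ℚ) =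
      ((sgn ε₁ * natUnit g₁ ^ (2 ^ α / 2) : ℚˣ) : ℚ) * ((y : ℚ)) ^ (2 ^ α) := by
    have h0 := congrArg Units.val hy
    rw [Units.val_pow_eq_pow_val, Units.val_mul, Units.val_inv_eq_inv_val] at h0
    rw [h0, mul_inv_cancel_left₀ hne]
  rw [nf_val ε₁ hp₁.ne', nf_val ε₂ hp₂.ne', hk] at hval
  have hyp : (0 : ℚ) < ((y : ℚ)) ^ (2 ^ α) := (even_two_pow hα).pow_pos (Units.ne_zero y)
  have hgp₁ : (0 : ℚ) < (g₁ : ℚ) ^ k := by positivity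
  have hgp₂ : (0 : ℚ) < (g₂ : ℚ) ^ k := by positivity
  have hεeq : ε₁ = ε₂ := by
    cases ε₁ <;> cases ε₂
    · rfl
    · exfalso; norm_num at hval; nlinarith
    · exfalso; norm_num at hval; nlinarith
    · rfl
  subst hεeq
  refine ⟨rfl, ?_⟩
  have hyy : ((y : ℚ)) ^ (2 ^ α) = (((y : ℚ)) ^ 2) ^ k := by rw [← pow_mul, ← h2k]
  have hpow : (g₂ : ℚ) ^ k = ((g₁ : ℚ) * ((y : ℚ)) ^ 2) ^ k := by
    rw [mul_pow, ← hyy]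
    cases ε₁ <;> norm_num at hval <;> linarith
  have hbase : (g₂ : ℚ) = (g₁ : ℚ) * ((y : ℚ)) ^ 2 := by
    have hyne : ((y : ℚ)) ≠ 0 := Units.ne_zero y
    have hb2 : (0 : ℚ) < (g₁ : ℚ) * ((y : ℚ)) ^ 2 := by positivity
    have hq : ((g₂ : ℚ) / ((g₁ : ℚ) * ((y : ℚ)) ^ 2)) ^ k = 1 := by
      rw [div_pow, hpow, div_self (by positivity)]
    have h1 := pos_pow_eq_one (by positivity) hk0 hq
    rw [div_eq_one_iff_eq hb2.ne'] at h1
    exact h1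
  exact sqf_eq h₁ h₂ (Units.ne_zero y) hbase


lemma natUnit_one : natUnit 1 = 1 := by
  apply Units.ext
  rw [natUnit_val one_ne_zero]
  norm_num

lemma mk_nf_one {α : ℕ} :
    (QuotientGroup.mk (sgn true * natUnit 1 ^ (2 ^ α / 2)) : ℚˣ ⧸ powSubgroup (2 ^ α)) = 1 := by
  rw [natUnit_one, one_pow, mul_one]
  show _ = ((1 : ℚˣ) : ℚˣ ⧸ powSubgroup (2 ^ α))
  rfl

lemma deltaClass_nf {α : ℕ} (hα : 0 < α) (ε : Bool) {g : ℕ} (hg : Squarefree g) (hg0 : 0 < g) :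
    deltaClass (2 ^ α) (QuotientGroup.mk (sgn ε * natUnit g ^ (2 ^ α / 2))) =
      if g % 4 = 1 then g else 4 * g := by
  set c : ℚˣ ⧸ powSubgroup (2 ^ α) := QuotientGroup.mk (sgn ε * natUnit g ^ (2 ^ α / 2)) with hc
  have hnf_of : ∀ (g' : ℕ), Squarefree g' → 0 < g' → ∀ ε' : Bool,
      (QuotientGroup.mk (sgn ε' * natUnit g' ^ (2 ^ α / 2)) : ℚˣ ⧸ powSubgroup (2 ^ α)) = c →
      ε' = ε ∧ g' = g := by
    intro g' hsf' hpos' ε' hcc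
    exact nf_inj hα hsf' hg hpos' hg0 (hcc.trans hc)
  by_cases hc1 : c = 1
  · have := hnf_of 1 squarefree_one one_pos true (by rw [mk_nf_one, hc1])
    obtain ⟨hε, hg1⟩ := this
    rw [deltaClass, if_pos hc1, ← hg1]
    norm_num
  · rcases eq_or_lt_of_le (show 1 ≤ g from hg0) with hg1 | hg1
    · -- g = 1, so ε = false (c ≠ 1), and the existential fails
      have hex : ¬ ∃ g' : ℕ, Squarefree g' ∧ 1 < g' ∧
          ((QuotientGroup.mk (natUnit g' ^ (2 ^ α / 2)) : ℚˣ ⧸ powSubgroup (2 ^ α)) = c ∨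
           (QuotientGroup.mk (-(natUnit g' ^ (2 ^ α / 2))) : ℚˣ ⧸ powSubgroup (2 ^ α)) = c) := by
        rintro ⟨g', hsf', hgt', hor⟩
        rcases hor with hor | hor
        · have : (QuotientGroup.mk (sgn true * natUnit g' ^ (2 ^ α / 2)) :
              ℚˣ ⧸ powSubgroup (2 ^ α)) = c := by
            rw [show sgn true = 1 from rfl, one_mul]; exact hor
          obtain ⟨-, hg'⟩ := hnf_of g' hsf' (by omega) true this
          omega
        · have : (QuotientGroup.mk (sgn false * natUnit g' ^ (2 ^ α / 2)) :
              ℚˣ ⧸ powSubgroup (2 ^ α)) = c := by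
            rw [show sgn false = -1 from rfl, neg_one_mul]; exact hor
          obtain ⟨-, hg'⟩ := hnf_of g' hsf' (by omega) false this
          omega
      rw [deltaClass, if_neg hc1, dif_neg hex, ← hg1]
      norm_num
    · -- 1 < g : the existential holds with witness g
      have hex : ∃ g' : ℕ, Squarefree g' ∧ 1 < g' ∧
          ((QuotientGroup.mk (natUnit g' ^ (2 ^ α / 2)) : ℚˣ ⧸ powSubgroup (2 ^ α)) = c ∨
           (QuotientGroup.mk (-(natUnit g' ^ (2 ^ α / 2))) : ℚˣ ⧸ powSubgroup (2 ^ α)) = c) := by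
        refine ⟨g, hg, hg1, ?_⟩
        cases ε
        · right; rw [hc]; congr 1
          rw [show sgn false = -1 from rfl, neg_one_mul]
        · left; rw [hc]; congr 1
          rw [show sgn true = 1 from rfl, one_mul]
      rw [deltaClass, if_neg hc1, dif_pos hex]
      obtain ⟨hsf', hgt', hor⟩ := hex.choose_spec
      have hgeq : hex.choose = g := by
        rcases hor with hor | hor
        · have : (QuotientGroup.mk (sgn true * natUnit hex.choose ^ (2 ^ α / 2)) :
              ℚˣ ⧸ powSubgroup (2 ^ α)) = c := by
            rw [show sgn true = 1 from rfl, one_mul]; exact hor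
          exact (hnf_of _ hsf' (by omega) true this).2
        · have : (QuotientGroup.mk (sgn false * natUnit hex.choose ^ (2 ^ α / 2)) :
              ℚˣ ⧸ powSubgroup (2 ^ α)) = c := by
            rw [show sgn false = -1 from rfl, neg_one_mul]; exact hor
          exact (hnf_of _ hsf' (by omega) false this).2
      rw [hgeq]


lemma isPosClass_nf {α : ℕ} (hα : 0 < α) (ε : Bool) {g : ℕ} (hg0 : 0 < g) :
    IsPosClass (2 ^ α) (QuotientGroup.mk (sgn ε * natUnit g ^ (2 ^ α / 2))) ↔ ε = true := by
  rw [isPosClass_iff hα, nf_val ε hg0.ne']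
  have hgp : (0 : ℚ) < (g : ℚ) ^ (2 ^ α / 2) := by positivity
  cases ε <;> simp <;> nlinarith

lemma v2_le_one {g : ℕ} (hg : Squarefree g) (hg0 : 0 < g) : padicValNat 2 g ≤ 1 := by
  by_contra hlt
  have h4 : 2 ^ 2 ∣ g := dvd_trans (pow_dvd_pow 2 (by omega)) pow_padicValNat_dvd
  exact (Nat.squarefree_iff_prime_squarefree.mp hg) 2 Nat.prime_two
    (by rw [show 2 * 2 = 2 ^ 2 by norm_num]; exact h4)

lemma v2_dvd_iff {g : ℕ} (hg0 : 0 < g) : 2 ∣ g ↔ 1 ≤ padicValNat 2 g := by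
  constructor
  · intro h; exact one_le_padicValNat_of_dvd hg0.ne' h
  · intro h
    have : (2 : ℕ) ^ 1 ∣ g := dvd_trans (pow_dvd_pow 2 h) pow_padicValNat_dvd
    simpa using this

lemma mod4_ne_zero {g : ℕ} (hg : Squarefree g) (hg0 : 0 < g) : g % 4 ≠ 0 := by
  intro h
  have h4 : 4 ∣ g := Nat.dvd_of_mod_eq_zero h
  exact (Nat.squarefree_iff_prime_squarefree.mp hg) 2 Nat.prime_two (by
    have : 2 * 2 = 4 := by norm_num
    rwa [this])

lemma v2D_val {g : ℕ} (hg : Squarefree g) (hg0 : 0 < g) :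
    padicValNat 2 (if g % 4 = 1 then g else 4 * g) =
      if g % 4 = 1 then 0 else if g % 2 = 1 then 2 else 3 := by
  have hv4 : ∀ h : ¬ g % 4 = 1, padicValNat 2 (4 * g) = 2 + padicValNat 2 g := by
    intro h
    have : (4 : ℕ) * g = 2 * (2 * g) := by ring
    rw [this, padicValNat.mul two_ne_zero (by positivity),
        padicValNat.mul two_ne_zero hg0.ne', padicValNat.self (by norm_num)]
    ring
  by_cases h1 : g % 4 = 1
  · rw [if_pos h1, if_pos h1]
    exact padicValNat.eq_zero_of_not_dvd (by omega)
  · rw [if_neg h1, if_neg h1, hv4 h1]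
    by_cases h2 : g % 2 = 1
    · rw [if_pos h2, padicValNat.eq_zero_of_not_dvd (by omega)]
    · rw [if_neg h2]
      have hd : 2 ∣ g := by omega
      have hge := (v2_dvd_iff hg0).mp hd
      have hle := v2_le_one hg hg0
      omega

/-- The tilde-condition in normal-form coordinates. -/
def Cond (α : ℕ) (ε : Bool) (g : ℕ) : Prop :=
  if ε then padicValNat 2 (if g % 4 = 1 then g else 4 * g) ≤ α
  else padicValNat 2 (if g % 4 = 1 then g else 4 * g) = α + 1

lemma parity_rel {g₁ g₂ g₃ t : ℕ} (h₁ : Squarefree g₁) (h₂ : Squarefree g₂)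
    (h₃ : Squarefree g₃) (hg₁ : 0 < g₁) (hg₂ : 0 < g₂) (hg₃ : 0 < g₃) (ht : 0 < t)
    (hrel : g₁ * g₂ = t ^ 2 * g₃) : (g₃ % 2 = 1 ↔ g₁ % 2 = g₂ % 2) := by
  have hv : padicValNat 2 g₁ + padicValNat 2 g₂ =
      2 * padicValNat 2 t + padicValNat 2 g₃ := by
    have e1 : padicValNat 2 (g₁ * g₂) = padicValNat 2 g₁ + padicValNat 2 g₂ :=
      padicValNat.mul hg₁.ne' hg₂.ne'
    have e2 : padicValNat 2 (t ^ 2 * g₃) = 2 * padicValNat 2 t + padicValNat 2 g₃ := by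
      rw [padicValNat.mul (by positivity) hg₃.ne', padicValNat.pow t 2]
    rw [← e1, ← e2, hrel]
  have l₁ := v2_le_one h₁ hg₁
  have l₂ := v2_le_one h₂ hg₂
  have l₃ := v2_le_one h₃ hg₃
  have d₁ := v2_dvd_iff hg₁
  have d₂ := v2_dvd_iff hg₂
  have d₃ := v2_dvd_iff hg₃
  omega

lemma mod4_rel {g₁ g₂ g₃ t : ℕ} (hrel : g₁ * g₂ = t ^ 2 * g₃)
    (ho₁ : g₁ % 2 = 1) (ho₂ : g₂ % 2 = 1) :
    g₃ % 4 = (g₁ % 4) * (g₂ % 4) % 4 := by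
  have hoddm : (g₁ * g₂) % 2 = 1 := by
    have := Nat.mul_mod g₁ g₂ 2
    rw [ho₁, ho₂] at this
    simpa using this
  have htodd : t % 2 = 1 := by
    rcases Nat.even_or_odd t with he | ho
    · exfalso
      have h2t : 2 ∣ t := he.two_dvd
      have : 2 ∣ g₁ * g₂ := by
        rw [hrel]
        exact Dvd.dvd.mul_right (dvd_pow h2t two_ne_zero) g₃
      omega
    · exact Nat.odd_iff.mp ho
  have ht4 : t ^ 2 % 4 = 1 := by
    obtain ⟨j, hj⟩ := Nat.odd_iff.mpr htodd
    have : t ^ 2 = 4 * (j * j + j) + 1 := by rw [hj]; ring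
    omega
  have e1 := Nat.mul_mod g₁ g₂ 4
  have e2 := Nat.mul_mod (t ^ 2) g₃ 4
  rw [ht4, one_mul] at e2
  rw [hrel] at e1
  omega


lemma cond_true {α g : ℕ} :
    Cond α true g ↔ padicValNat 2 (if g % 4 = 1 then g else 4 * g) ≤ α := by
  simp [Cond]

lemma cond_false {α g : ℕ} :
    Cond α false g ↔ padicValNat 2 (if g % 4 = 1 then g else 4 * g) = α + 1 := by
  simp [Cond]

lemma v2D_cases {g : ℕ} (hg : Squarefree g) (hg0 : 0 < g) :
    (g % 4 = 1 ∧ padicValNat 2 (if g % 4 = 1 then g else 4 * g) = 0) ∨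
    (g % 4 = 3 ∧ padicValNat 2 (if g % 4 = 1 then g else 4 * g) = 2) ∨
    (g % 2 = 0 ∧ padicValNat 2 (if g % 4 = 1 then g else 4 * g) = 3) := by
  have hv := v2D_val hg hg0
  have hm := mod4_ne_zero hg hg0
  by_cases h1 : g % 4 = 1
  · left; exact ⟨h1, by rw [hv, if_pos h1]⟩
  · by_cases h2 : g % 2 = 1
    · right; left; refine ⟨by omega, by rw [hv, if_neg h1, if_pos h2]⟩
    · right; right; exact ⟨by omega, by rw [hv, if_neg h1, if_neg h2]⟩

set_option maxHeartbeats 2000000 in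
lemma cond_mul {α : ℕ} (hα : 0 < α) {ε₁ ε₂ : Bool} {g₁ g₂ g₃ t : ℕ}
    (h₁ : Squarefree g₁) (h₂ : Squarefree g₂) (h₃ : Squarefree g₃)
    (hg₁ : 0 < g₁) (hg₂ : 0 < g₂) (hg₃ : 0 < g₃) (ht : 0 < t)
    (hrel : g₁ * g₂ = t ^ 2 * g₃)
    (c₁ : Cond α ε₁ g₁) (c₂ : Cond α ε₂ g₂) : Cond α (ε₁ == ε₂) g₃ := by
  have w₁ := v2D_cases h₁ hg₁
  have w₂ := v2D_cases h₂ hg₂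
  have w₃ := v2D_cases h₃ hg₃
  have hpar := parity_rel h₁ h₂ h₃ hg₁ hg₂ hg₃ ht hrel
  have hm4 : (g₁ % 4 = 1 → g₂ % 4 = 1 → g₃ % 4 = 1) ∧
      (g₁ % 4 = 1 → g₂ % 4 = 3 → g₃ % 4 = 3) ∧
      (g₁ % 4 = 3 → g₂ % 4 = 1 → g₃ % 4 = 3) ∧
      (g₁ % 4 = 3 → g₂ % 4 = 3 → g₃ % 4 = 1) := by
    refine ⟨?_, ?_, ?_, ?_⟩ <;> intro a b <;>
      · have hmr := mod4_rel hrel (by omega) (by omega)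
        rw [a, b] at hmr
        norm_num at hmr
        omega
  obtain ⟨q₁, q₂, q₃, q₄⟩ := hm4
  cases ε₁ <;> cases ε₂
  · rw [show (false == false) = true from rfl, cond_true]
    rw [cond_false] at c₁ c₂
    rcases w₁ with ⟨a1, b1⟩ | ⟨a1, b1⟩ | ⟨a1, b1⟩ <;>
      rcases w₂ with ⟨a2, b2⟩ | ⟨a2, b2⟩ | ⟨a2, b2⟩ <;>
      rcases w₃ with ⟨a3, b3⟩ | ⟨a3, b3⟩ | ⟨a3, b3⟩ <;>
      omega
  · rw [show (false == true) = false from rfl, cond_false]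
    rw [cond_false] at c₁; rw [cond_true] at c₂
    rcases w₁ with ⟨a1, b1⟩ | ⟨a1, b1⟩ | ⟨a1, b1⟩ <;>
      rcases w₂ with ⟨a2, b2⟩ | ⟨a2, b2⟩ | ⟨a2, b2⟩ <;>
      rcases w₃ with ⟨a3, b3⟩ | ⟨a3, b3⟩ | ⟨a3, b3⟩ <;>
      omega
  · rw [show (true == false) = false from rfl, cond_false]
    rw [cond_true] at c₁; rw [cond_false] at c₂
    rcases w₁ with ⟨a1, b1⟩ | ⟨a1, b1⟩ | ⟨a1, b1⟩ <;>
      rcases w₂ with ⟨a2, b2⟩ | ⟨a2, b2⟩ | ⟨a2, b2⟩ <;>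
      rcases w₃ with ⟨a3, b3⟩ | ⟨a3, b3⟩ | ⟨a3, b3⟩ <;>
      omega
  · rw [show (true == true) = true from rfl, cond_true]
    rw [cond_true] at c₁ c₂
    rcases w₁ with ⟨a1, b1⟩ | ⟨a1, b1⟩ | ⟨a1, b1⟩ <;>
      rcases w₂ with ⟨a2, b2⟩ | ⟨a2, b2⟩ | ⟨a2, b2⟩ <;>
      rcases w₃ with ⟨a3, b3⟩ | ⟨a3, b3⟩ | ⟨a3, b3⟩ <;>
      omega


lemma nf_mul {α : ℕ} (hα : 0 < α) (ε₁ ε₂ : Bool) {g₁ g₂ : ℕ} (hg₁ : 0 < g₁) (hg₂ : 0 < g₂) :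
    ∃ (g₃ t : ℕ), Squarefree g₃ ∧ 0 < g₃ ∧ 0 < t ∧ g₁ * g₂ = t ^ 2 * g₃ ∧
      (QuotientGroup.mk (sgn ε₁ * natUnit g₁ ^ (2 ^ α / 2)) *
        QuotientGroup.mk (sgn ε₂ * natUnit g₂ ^ (2 ^ α / 2)) : ℚˣ ⧸ powSubgroup (2 ^ α)) =
      QuotientGroup.mk (sgn (ε₁ == ε₂) * natUnit g₃ ^ (2 ^ α / 2)) := by
  obtain ⟨hk, h2k⟩ := two_pow_div_two hα
  obtain ⟨g₃, t, hg₃, ht, hab, hsq⟩ := Nat.sq_mul_squarefree_of_pos (Nat.mul_pos hg₁ hg₂)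
  refine ⟨g₃, t, hsq, hg₃, ht, hab.symm, ?_⟩
  rw [← QuotientGroup.mk_mul]
  have htq : ((t : ℚ)) ≠ 0 := by exact_mod_cast ht.ne'
  apply mk_eq_of_val (t := (t : ℚ)) htq
  rw [Units.val_mul, nf_val ε₁ hg₁.ne', nf_val ε₂ hg₂.ne', nf_val (ε₁ == ε₂) hg₃.ne', hk]
  have hcast : (g₁ : ℚ) * (g₂ : ℚ) = (t : ℚ) ^ 2 * (g₃ : ℚ) := by exact_mod_cast hab.symm
  have key : (g₁ : ℚ) ^ (2 ^ (α - 1)) * (g₂ : ℚ) ^ (2 ^ (α - 1)) =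
      (g₃ : ℚ) ^ (2 ^ (α - 1)) * (t : ℚ) ^ (2 ^ α) := by
    rw [← mul_pow, hcast, mul_pow, ← pow_mul, ← h2k]; ring
  cases ε₁ <;> cases ε₂ <;> norm_num <;> linear_combination key

lemma quot_pow_eq_one (n : ℕ) (c : ℚˣ ⧸ powSubgroup n) : c ^ n = 1 := by
  obtain ⟨x, rfl⟩ := QuotientGroup.mk_surjective c
  rw [← QuotientGroup.mk_pow, QuotientGroup.eq_one_iff]
  exact mem_powSubgroup.mpr ⟨x, rfl⟩

lemma gammaMod_fg (Γ : Subgroup ℚˣ) (hFG : Γ.FG) (n : ℕ) : (GammaMod Γ n).FG := by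
  obtain ⟨S, hS⟩ := hFG
  exact ⟨Finset.image (QuotientGroup.mk' (powSubgroup n)) S, by
    rw [Finset.coe_image, ← MonoidHom.map_closure, hS]; rfl⟩

lemma gammaMod_finite (Γ : Subgroup ℚˣ) (hFG : Γ.FG) {n : ℕ} (hn : 0 < n) :
    Finite ↥(GammaMod Γ n) := by
  haveI : Group.FG ↥(GammaMod Γ n) := (Group.fg_iff_subgroup_fg _).mpr (gammaMod_fg Γ hFG n)
  apply CommGroup.finite_of_fg_torsion
  intro g
  refine isOfFinOrder_iff_pow_eq_one.mpr ⟨n, hn, ?_⟩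
  apply Subtype.ext
  simp only [SubmonoidClass.coe_pow, OneMemClass.coe_one]
  exact quot_pow_eq_one n ↑g

end TGaux
end TGaux


/-- **`tildeΓ(m)` is a subgroup of the 2-torsion subgroup `Γ(m₂)[2]`**, and its order
is a power of `2`. -/
theorem tildeGamma_isSubgroup (Γ : Subgroup ℚˣ) (hFG : Γ.FG) (m : ℕ) (hm : 1 ≤ m) :
    ∃ H : Subgroup (ℚˣ ⧸ powSubgroup (2 ^ padicValNat 2 m)),
      (H : Set (ℚˣ ⧸ powSubgroup (2 ^ padicValNat 2 m))) = tildeGamma Γ m ∧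
      (∀ c ∈ H, c ∈ GammaMod Γ (2 ^ padicValNat 2 m) ∧ c ^ 2 = 1) ∧
      ∃ k : ℕ, Nat.card (tildeGamma Γ m) = 2 ^ k := by
  classical
  have hone : (1 : ℚˣ ⧸ powSubgroup (2 ^ padicValNat 2 m)) ∈ tildeGamma Γ m := by
    refine ⟨(GammaMod Γ _).one_mem, one_pow 2, ?_⟩
    rw [if_pos ⟨1, rfl, by norm_num⟩]
    rw [show deltaClass (2 ^ padicValNat 2 m) 1 = 1 from by rw [deltaClass, if_pos rfl]]
    simp
  rcases Nat.eq_zero_or_pos (padicValNat 2 m) with hα0 | hα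
  · -- degenerate case: the quotient is trivial
    have hall : ∀ x : ℚˣ, x ∈ powSubgroup (2 ^ padicValNat 2 m) := fun x =>
      TGaux.mem_powSubgroup.mpr ⟨x, by rw [hα0, pow_zero, pow_one]⟩
    haveI hss : Subsingleton (ℚˣ ⧸ powSubgroup (2 ^ padicValNat 2 m)) := by
      constructor
      intro a b
      obtain ⟨x, rfl⟩ := QuotientGroup.mk_surjective a
      obtain ⟨y, rfl⟩ := QuotientGroup.mk_surjective b
      exact QuotientGroup.eq.mpr (hall _)
    have huniv : tildeGamma Γ m = Set.univ := by
      ext c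
      simp only [Set.mem_univ, iff_true]
      rw [Subsingleton.elim c 1]
      exact hone
    refine ⟨⊤, ?_, ?_, 0, ?_⟩
    · rw [Subgroup.coe_top, huniv]
    · intro c _
      rw [Subsingleton.elim c 1]
      exact ⟨(GammaMod Γ _).one_mem, one_pow 2⟩
    · haveI : Inhabited (ℚˣ ⧸ powSubgroup (2 ^ padicValNat 2 m)) := ⟨1⟩
      haveI : Unique (ℚˣ ⧸ powSubgroup (2 ^ padicValNat 2 m)) := Unique.mk' _
      rw [huniv, pow_zero, Nat.card_congr (Equiv.Set.univ _), Nat.card_unique]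
  · -- main case
    have hcond : ∀ (ε : Bool) (g : ℕ), Squarefree g → 0 < g →
        ((if IsPosClass (2 ^ padicValNat 2 m)
            (QuotientGroup.mk (TGaux.sgn ε * natUnit g ^ (2 ^ padicValNat 2 m / 2)))
          then padicValNat 2 (deltaClass (2 ^ padicValNat 2 m)
            (QuotientGroup.mk (TGaux.sgn ε * natUnit g ^ (2 ^ padicValNat 2 m / 2)))) ≤
              padicValNat 2 m
          else padicValNat 2 (deltaClass (2 ^ padicValNat 2 m)
            (QuotientGroup.mk (TGaux.sgn ε * natUnit g ^ (2 ^ padicValNat 2 m / 2)))) =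
              padicValNat 2 m + 1)
          ↔ TGaux.Cond (padicValNat 2 m) ε g) := by
      intro ε g hsf hg0
      rw [TGaux.deltaClass_nf hα ε hsf hg0]
      cases ε
      · rw [if_neg (by
          intro hp
          simpa using (TGaux.isPosClass_nf hα false hg0).mp hp), TGaux.cond_false]
      · rw [if_pos ((TGaux.isPosClass_nf hα true hg0).mpr rfl), TGaux.cond_true]
    let H : Subgroup (ℚˣ ⧸ powSubgroup (2 ^ padicValNat 2 m)) :=
      { carrier := tildeGamma Γ m
        one_mem' := hone
        mul_mem' := by
          intro a b ha hb
          obtain ⟨ha1, ha2, ha3⟩ := ha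
          obtain ⟨hb1, hb2, hb3⟩ := hb
          obtain ⟨ε₁, g₁, hsf₁, hg₁, hc₁⟩ := TGaux.exists_nf hα a ha2
          obtain ⟨ε₂, g₂, hsf₂, hg₂, hc₂⟩ := TGaux.exists_nf hα b hb2
          subst hc₁; subst hc₂
          obtain ⟨g₃, t, hsf₃, hg₃, ht, hrel, hmul⟩ := TGaux.nf_mul hα ε₁ ε₂ hg₁ hg₂
          refine ⟨Subgroup.mul_mem _ ha1 hb1, by rw [mul_pow, ha2, hb2, one_mul], ?_⟩
          rw [hmul]
          exact (hcond (ε₁ == ε₂) g₃ hsf₃ hg₃).mpr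
            (TGaux.cond_mul hα hsf₁ hsf₂ hsf₃ hg₁ hg₂ hg₃ ht hrel
              ((hcond ε₁ g₁ hsf₁ hg₁).mp ha3) ((hcond ε₂ g₂ hsf₂ hg₂).mp hb3))
        inv_mem' := by
          intro a ha
          have h2 : a * a = 1 := by rw [← pow_two]; exact ha.2.1
          rw [inv_eq_of_mul_eq_one_right h2]
          exact ha }
    have hfinG : Finite ↥(GammaMod Γ (2 ^ padicValNat 2 m)) :=
      TGaux.gammaMod_finite Γ hFG (by positivity)
    have hfin : (tildeGamma Γ m).Finite := by
      apply Set.Finite.subset (Set.finite_coe_iff.mp hfinG)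
      exact fun c hc => hc.1
    haveI hfinsub : Finite ↥(tildeGamma Γ m) := Set.finite_coe_iff.mpr hfin
    haveI : Finite ↥H := hfinsub
    haveI : Fact (Nat.Prime 2) := ⟨Nat.prime_two⟩
    have h2grp : IsPGroup 2 ↥H := by
      intro g
      refine ⟨1, ?_⟩
      have hgm : (↑g : ℚˣ ⧸ powSubgroup (2 ^ padicValNat 2 m)) ∈ tildeGamma Γ m := g.2
      apply Subtype.ext
      simp only [pow_one, SubmonoidClass.coe_pow, OneMemClass.coe_one]
      exact hgm.2.1
    obtain ⟨kk, hkk⟩ := (IsPGroup.iff_card (p := 2)).mp h2grp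
    refine ⟨H, rfl, ?_, kk, ?_⟩
    · intro c hc
      have h' : c ∈ tildeGamma Γ m := hc
      exact ⟨h'.1, h'.2.1⟩
    · rw [← hkk]
      exact Nat.card_congr (Equiv.setCongr (rfl : (H : Set _) = tildeGamma Γ m)).symm
end

section
/- Let Γ ⊂ ℚ* be a finitely generated subgroup and let m be an even positive integer. Then tildeΓ_{m,2} = {γ ∈ Γ(2) : disc(ℚ(√γ')) ∣ m}. -/
/- Common definitions: finitely generated multiplicative subgroups `Γ ⊆ ℚˣ`,
the quotients `Γ(n) = Γ·(ℚ*)ⁿ/(ℚ*)ⁿ`, the invariants `δ(γ)`, the group `tildeΓ(m)`,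
the constants `A(Γ,m)` and `B_{Γ,k}`, and the density `ρ(Γ,m)`. -/

open scoped Classical

namespace TGMD

noncomputable def zC (N : ℕ) : ℂ := Complex.exp (2 * Real.pi * Complex.I / N)

lemma zC_prim {N : ℕ} (hN : N ≠ 0) : IsPrimitiveRoot (zC N) N :=
  Complex.isPrimitiveRoot_exp N hN

lemma zC_mem {N : ℕ} : zC N ∈ cycloField N :=
  IntermediateField.subset_adjoin _ _ rfl

lemma zC_pow_div {d N : ℕ} (hd : d ≠ 0) (hN : N ≠ 0) (h : d ∣ N) :
    zC N ^ (N / d) = zC d := by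
  obtain ⟨k, rfl⟩ := h
  have hk : k ≠ 0 := by rintro rfl; simp at hN
  rw [Nat.mul_div_cancel_left _ (Nat.pos_of_ne_zero hd)]
  rw [zC, zC, ← Complex.exp_nat_mul]
  congr 1
  have hdC : (d : ℂ) ≠ 0 := Nat.cast_ne_zero.mpr hd
  have hkC : (k : ℂ) ≠ 0 := Nat.cast_ne_zero.mpr hk
  push_cast
  field_simp

lemma cycloField_mono {d N : ℕ} (hd : d ≠ 0) (hN : N ≠ 0) (h : d ∣ N) :
    cycloField d ≤ cycloField N := by
  rw [cycloField, IntermediateField.adjoin_le_iff]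
  intro x hx
  rw [Set.mem_singleton_iff] at hx
  subst hx
  show zC d ∈ cycloField N
  rw [← zC_pow_div hd hN h]
  exact pow_mem zC_mem _

/-- `√r ∈ ℚ(ζ_m)`. -/
def S (m : ℕ) (r : ℚ) : Prop := ∃ z ∈ cycloField m, z ^ 2 = (r : ℂ)

lemma ratCast_mem (m : ℕ) (q : ℚ) : (q : ℂ) ∈ cycloField m := by
  have := IntermediateField.algebraMap_mem (cycloField m) q
  rwa [eq_ratCast (algebraMap ℚ ℂ) q] at this

lemma S.mul {m : ℕ} {r s : ℚ} (hr : S m r) (hs : S m s) : S m (r * s) := by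
  obtain ⟨z, hz, hz2⟩ := hr
  obtain ⟨w, hw, hw2⟩ := hs
  exact ⟨z * w, mul_mem hz hw, by push_cast; rw [mul_pow, hz2, hw2]⟩

lemma S_one (m : ℕ) : S m 1 := ⟨1, one_mem _, by norm_num⟩

lemma S_sq (m : ℕ) (q : ℚ) : S m (q ^ 2) := ⟨(q : ℂ), ratCast_mem m q, by push_cast; ring⟩

lemma S.mul_sq {m : ℕ} {r : ℚ} (q : ℚ) (hr : S m r) : S m (q ^ 2 * r) := (S_sq m q).mul hr

lemma S.of_mul_sq {m : ℕ} {r : ℚ} {q : ℚ} (hq : q ≠ 0) (h : S m (q ^ 2 * r)) : S m r := by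
  obtain ⟨z, hz, hz2⟩ := h
  refine ⟨z / (q : ℂ), div_mem hz (ratCast_mem m q), ?_⟩
  have hqC : (q : ℂ) ≠ 0 := by exact_mod_cast hq
  rw [div_pow, hz2]
  push_cast
  field_simp

lemma S.of_dvd {d m : ℕ} {r : ℚ} (hd : d ≠ 0) (hm : m ≠ 0) (h : d ∣ m) (hS : S d r) :
    S m r := by
  obtain ⟨z, hz, hz2⟩ := hS
  exact ⟨z, cycloField_mono hd hm h hz, hz2⟩

lemma zC4_sq : zC 4 ^ 2 = -1 := by
  rw [zC, ← Complex.exp_nat_mul, ← Complex.exp_pi_mul_I]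
  congr 1
  have : (4 : ℂ) ≠ 0 := by norm_num
  field_simp
  ring

lemma S_four_neg_one : S 4 (-1) := ⟨zC 4, zC_mem, by rw [zC4_sq]; norm_num⟩

lemma zC8_pow4 : zC 8 ^ 4 = -1 := by
  rw [zC, ← Complex.exp_nat_mul, ← Complex.exp_pi_mul_I]
  congr 1
  have : (8 : ℂ) ≠ 0 := by norm_num
  field_simp
  ring

lemma S_eight_two : S 8 2 := by
  refine ⟨zC 8 + (zC 8)⁻¹, add_mem zC_mem (inv_mem zC_mem), ?_⟩
  have h0 : zC 8 ≠ 0 := Complex.exp_ne_zero _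
  have h4 := zC8_pow4
  have hinv : (zC 8)⁻¹ = -zC 8 ^ 3 :=
    inv_eq_of_mul_eq_one_right (by linear_combination -h4)
  rw [hinv]
  push_cast
  linear_combination (zC 8 ^ 2 - 2) * h4

end TGMD
namespace TGMD

def pStar (p : ℕ) : ℤ := if p % 4 = 1 then (p : ℤ) else -(p : ℤ)

lemma S_pStar {p : ℕ} (hp : p.Prime) (hodd : p ≠ 2) : S p ((pStar p : ℤ) : ℚ) := by
  haveI : Fact p.Prime := ⟨hp⟩
  have hp0 : p ≠ 0 := hp.ne_zero
  haveI : NeZero p := ⟨hp0⟩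
  have hζ : IsPrimitiveRoot (zC p) p := zC_prim hp0
  have hζ1 : zC p ^ p = 1 := hζ.pow_eq_one
  set ψ : AddChar (ZMod p) ℂ := AddChar.zmodChar p hζ1 with hψdef
  set χ : MulChar (ZMod p) ℂ := (quadraticChar (ZMod p)).ringHomComp (Int.castRingHom ℂ) with hχdef
  have hψ : ψ.IsPrimitive := AddChar.zmodChar_primitive_of_primitive_root p hζ
  have hring : ringChar (ZMod p) ≠ 2 := by
    rw [ZMod.ringChar_zmod_n]; exact hodd
  have hχ1 : χ ≠ 1 :=
    (MulChar.ringHomComp_ne_one_iff Int.cast_injective).mpr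
      (quadraticChar_ne_one hring)
  have hχq : χ.IsQuadratic := (quadraticChar_isQuadratic (ZMod p)).comp _
  have hsq := gaussSum_sq hχ1 hχq hψ
  refine ⟨gaussSum χ ψ, ?_, ?_⟩
  · rw [gaussSum]
    refine Subfield.sum_mem _ fun a _ => ?_
    refine mul_mem ?_ ?_
    · rw [hχdef, MulChar.ringHomComp_apply]
      exact intCast_mem (cycloField p) _
    · rw [hψdef, AddChar.zmodChar_apply]
      exact pow_mem zC_mem _
  · rw [hsq]
    have hm1 : χ (-1) = ((quadraticChar (ZMod p) (-1) : ℤ) : ℂ) := rfl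
    rw [hm1, quadraticChar_neg_one hring, ZMod.card]
    have hp2 : p % 2 = 1 := Nat.odd_iff.mp (hp.odd_of_ne_two hodd)
    rw [ZMod.χ₄_nat_eq_if_mod_four]
    rw [pStar]
    by_cases h4 : p % 4 = 1
    · have : ¬ p % 2 = 0 := by omega
      simp [h4, this]
    · have : ¬ p % 2 = 0 := by omega
      simp only [this, if_false, h4, if_false]
      push_cast
      ring

end TGMD
namespace TGMD

def cStar (c : ℤ) : ℤ := if c % 4 = 1 then c else -c

lemma cStar_cases (c : ℤ) : cStar c = c ∨ cStar c = -c := by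
  unfold cStar; split <;> simp

lemma cStar_mod {c : ℤ} (hodd : c % 2 = 1) : cStar c % 4 = 1 := by
  unfold cStar; split <;> omega

lemma S_cStar : ∀ c : ℤ, Squarefree c → c % 2 = 1 → S c.natAbs ((cStar c : ℤ) : ℚ) := by
  intro c hsf hodd
  generalize hn : c.natAbs = n
  induction n using Nat.strong_induction_on generalizing c with
  | _ n ih =>
  have hc0 : c ≠ 0 := hsf.ne_zero
  have hn0 : n ≠ 0 := by rw [← hn]; simpa using hc0
  by_cases hn1 : n = 1
  · subst hn1
    have : c = 1 ∨ c = -1 := by omega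
    rcases this with rfl | rfl
    · simpa [cStar] using S_one 1
    · simpa [cStar] using S_one 1
  · have hp : n.minFac.Prime := Nat.minFac_prime hn1
    set p := n.minFac with hpdef
    have hpn : p ∣ n := Nat.minFac_dvd n
    have hpc : (p : ℤ) ∣ c := by
      have h1 : (p : ℤ) ∣ (c.natAbs : ℤ) := Int.natCast_dvd_natCast.mpr (hn ▸ hpn)
      exact h1.trans (Int.natAbs_dvd.mpr dvd_rfl)
    have hpodd : p ≠ 2 := by
      intro h2
      rw [h2] at hpc
      omega
    have hp2 : (p : ℤ) % 2 = 1 := by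
      have := Nat.odd_iff.mp (hp.odd_of_ne_two hpodd)
      omega
    obtain ⟨c', rfl⟩ := hpc
    have hc'0 : c' ≠ 0 := by rintro rfl; simp at hc0
    have hsf' : Squarefree c' := hsf.squarefree_of_dvd ⟨(p : ℤ), mul_comm _ _⟩
    have hodd' : c' % 2 = 1 := by
      rcases Int.even_or_odd c' with ⟨d, hd⟩ | ⟨d, hd⟩
      · exfalso
        rw [hd, show (p : ℤ) * (d + d) = 2 * ((p : ℤ) * d) by ring] at hodd
        omega
      · omega
    have hlt : c'.natAbs < n := by
      have h1 : ((p : ℤ) * c').natAbs = p * c'.natAbs := by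
        rw [Int.natAbs_mul, Int.natAbs_natCast]
      have hple : 2 ≤ p := hp.two_le
      have hca : c'.natAbs ≠ 0 := by simpa using hc'0
      rw [h1] at hn
      nlinarith [Nat.pos_of_ne_zero hca]
    have hS1 : S p ((pStar p : ℤ) : ℚ) := S_pStar hp hpodd
    have hS2 : S c'.natAbs ((cStar c' : ℤ) : ℚ) := ih _ hlt c' hsf' hodd' rfl
    have hd2 : c'.natAbs ∣ n := by
      rw [← hn, Int.natAbs_mul]
      exact Dvd.intro_left _ rfl
    have hS1' : S n ((pStar p : ℤ) : ℚ) := hS1.of_dvd hp.ne_zero hn0 hpn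
    have hS2' : S n ((cStar c' : ℤ) : ℚ) :=
      hS2.of_dvd (by simpa using hc'0) hn0 hd2
    have key : (pStar p : ℤ) * cStar c' = cStar ((p : ℤ) * c') := by
      have hps : pStar p = (p : ℤ) ∨ pStar p = -(p : ℤ) := by unfold pStar; split <;> simp
      have hp41 : pStar p % 4 = 1 := by
        unfold pStar; split <;> omega
      have hc41 : cStar c' % 4 = 1 := cStar_mod hodd'
      have hcc41 : cStar ((p : ℤ) * c') % 4 = 1 := cStar_mod hodd
      have habs : (pStar p : ℤ) * cStar c' = (p : ℤ) * c' ∨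
          (pStar p : ℤ) * cStar c' = -((p : ℤ) * c') := by
        rcases hps with h1 | h1 <;> rcases cStar_cases c' with h2 | h2 <;>
          rw [h1, h2] <;> [left; right; right; left] <;> ring
      have hmod : ((pStar p) * cStar c') % 4 = 1 := by
        rw [Int.mul_emod, hp41, hc41]; norm_num
      rcases cStar_cases ((p : ℤ) * c') with h3 | h3 <;> rcases habs with h4 | h4 <;> omega
    have hmul := hS1'.mul hS2'
    rw [show (((pStar p : ℤ) : ℚ) * ((cStar c' : ℤ) : ℚ)) = ((cStar ((p : ℤ) * c') : ℤ) : ℚ) by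
      push_cast [← key]; ring] at hmul
    exact hmul

lemma S_neg_one {m : ℕ} (hm : m ≠ 0) (h4 : 4 ∣ m) : S m (-1) :=
  S_four_neg_one.of_dvd (by norm_num) hm h4

lemma S_two {m : ℕ} (hm : m ≠ 0) (h8 : 8 ∣ m) : S m 2 :=
  S_eight_two.of_dvd (by norm_num) hm h8

lemma S_of_squarefree_odd {c : ℤ} (hsf : Squarefree c) (hodd : c % 2 = 1) {m : ℕ}
    (hm : m ≠ 0) (hdvd : c.natAbs ∣ m) (h4 : 4 ∣ m) : S m ((c : ℤ) : ℚ) := by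
  have hc0 : c ≠ 0 := hsf.ne_zero
  have h1 : S m ((cStar c : ℤ) : ℚ) :=
    (S_cStar c hsf hodd).of_dvd (by simpa using hc0) hm hdvd
  rcases cStar_cases c with h | h
  · rwa [h] at h1
  · have h2 := (S_neg_one hm h4).mul h1
    rw [h] at h2
    convert h2 using 2
    push_cast
    ring

lemma S_of_squarefree {b : ℤ} (hsf : Squarefree b) {m : ℕ} (hm : m ≠ 0)
    (hdvd : b.natAbs ∣ m) (h8 : 8 ∣ m) : S m ((b : ℤ) : ℚ) := by
  have h4 : 4 ∣ m := dvd_trans (by norm_num) h8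
  rcases Int.even_or_odd b with he | ⟨k, hk⟩
  · obtain ⟨c, rfl⟩ := he
    rw [← two_mul] at hsf hdvd ⊢
    have hsfc : Squarefree c := hsf.squarefree_of_dvd ⟨2, mul_comm _ _⟩
    have hcodd : c % 2 = 1 := by
      rcases Int.even_or_odd c with ⟨d, hd⟩ | ⟨d, hd⟩
      · exfalso
        have hnu : ¬ IsUnit (2 : ℤ) := by decide
        exact hnu (hsf 2 ⟨d, by rw [hd]; ring⟩)
      · omega
    have hdc : c.natAbs ∣ m :=
      dvd_trans (by rw [Int.natAbs_mul]; exact Dvd.intro_left _ rfl) hdvd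
    have h1 := (S_two hm h8).mul (S_of_squarefree_odd hsfc hcodd hm hdc h4)
    convert h1 using 2
    push_cast
    ring
  · exact S_of_squarefree_odd hsf (by omega) hm hdvd h4

/-- Lemma A: if the quadratic discriminant divides `m`, then `√b ∈ ℚ(ζ_m)`. -/
lemma lemA {b : ℤ} (hsf : Squarefree b) {m : ℕ} (hm : m ≠ 0)
    (hD : (if b % 4 = 1 then b else 4 * b) ∣ (m : ℤ)) : S m ((b : ℤ) : ℚ) := by
  have hb0 : b ≠ 0 := hsf.ne_zero
  by_cases h41 : b % 4 = 1
  · rw [if_pos h41] at hD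
    have hdvd : b.natAbs ∣ m := by
      rw [← Int.natAbs_natCast m]
      exact Int.natAbs_dvd_natAbs.mpr hD
    have h1 := (S_cStar b hsf (by omega)).of_dvd (by simpa using hb0) hm hdvd
    rwa [cStar, if_pos h41] at h1
  · rw [if_neg h41] at hD
    have hdvd : b.natAbs ∣ m := by
      rw [← Int.natAbs_natCast m]
      exact Int.natAbs_dvd_natAbs.mpr ((dvd_mul_left b 4).trans hD)
    rcases Int.even_or_odd b with he | ⟨k, hk⟩
    · have h8 : (8 : ℤ) ∣ (m : ℤ) := by
        obtain ⟨c, rfl⟩ := he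
        exact dvd_trans ⟨c, by ring⟩ hD
      have h8' : 8 ∣ m := by exact_mod_cast h8
      exact S_of_squarefree hsf hm hdvd h8'
    · have h4 : (4 : ℤ) ∣ (m : ℤ) := (dvd_mul_right 4 b).trans hD
      have h4' : 4 ∣ m := by exact_mod_cast h4
      exact S_of_squarefree_odd hsf (by omega) hm hdvd h4'

end TGMD
namespace TGMD

lemma pow_mod' {G : Type*} [Monoid G] {x : G} {n : ℕ} (h : x ^ n = 1) (a : ℕ) :
    x ^ a = x ^ (a % n) := by
  conv_lhs => rw [← Nat.div_add_mod a n]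
  rw [pow_add, pow_mul, h, one_pow, one_mul]

lemma pow_eq_of_modEq {G : Type*} [Monoid G] {x : G} {n : ℕ} (h : x ^ n = 1) {a b : ℕ}
    (hab : a ≡ b [MOD n]) : x ^ a = x ^ b := by
  rw [pow_mod' h a, pow_mod' h b, hab]

lemma zC_integral {m : ℕ} (hm : m ≠ 0) : IsIntegral ℚ (zC m) := by
  refine ⟨Polynomial.X ^ m - Polynomial.C 1, Polynomial.monic_X_pow_sub_C 1 hm, ?_⟩
  have h := (zC_prim hm).pow_eq_one
  simp [Polynomial.eval₂_sub, Polynomial.eval₂_pow, h]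

lemma cycloField_toSubalgebra {m : ℕ} (hm : m ≠ 0) :
    (cycloField m).toSubalgebra = Algebra.adjoin ℚ {zC m} :=
  IntermediateField.adjoin_simple_toSubalgebra_of_isAlgebraic (zC_integral hm).isAlgebraic

/-- Lift of `zC m` into `cycloField N`. -/
noncomputable def zLift {m N : ℕ} (hm : m ≠ 0) (hN : N ≠ 0) (hmN : m ∣ N) : cycloField N :=
  ⟨zC m, cycloField_mono hm hN hmN zC_mem⟩

lemma mem_adjoin_lift {m N : ℕ} (hm : m ≠ 0) (hN : N ≠ 0) (hmN : m ∣ N)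
    {z : ℂ} (hz : z ∈ cycloField m) :
    (⟨z, cycloField_mono hm hN hmN hz⟩ : cycloField N) ∈
      Algebra.adjoin ℚ {zLift hm hN hmN} := by
  have h1 : z ∈ Algebra.adjoin ℚ ({zC m} : Set ℂ) := by
    rw [← cycloField_toSubalgebra hm]
    exact hz
  have h2 : Algebra.adjoin ℚ ({zC m} : Set ℂ) =
      Subalgebra.map (cycloField N).val (Algebra.adjoin ℚ {zLift hm hN hmN}) := by
    rw [AlgHom.map_adjoin]
    congr 1
    rw [Set.image_singleton]
    rfl
  rw [h2] at h1
  obtain ⟨w', hw', hval⟩ := h1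
  have hww : w' = ⟨z, cycloField_mono hm hN hmN hz⟩ := Subtype.ext hval
  rwa [← hww]

lemma cyclo_ext {N : ℕ} (hN : N ≠ 0) :
    IsCyclotomicExtension {N} ℚ (cycloField N) := by
  have hζ : IsPrimitiveRoot (zC N) N := zC_prim hN
  have hζ' : IsPrimitiveRoot (⟨zC N, zC_mem⟩ : cycloField N) N :=
    IsPrimitiveRoot.coe_submonoidClass_iff.mp hζ
  constructor
  · rintro n hn _
    rw [Set.mem_singleton_iff] at hn
    rw [hn]
    exact ⟨⟨zC N, zC_mem⟩, hζ'⟩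
  · intro x
    have h1 : x ∈ Algebra.adjoin ℚ ({(⟨zC N, zC_mem⟩ : cycloField N)} : Set (cycloField N)) := by
      have := mem_adjoin_lift hN hN dvd_rfl x.2
      have hx : (⟨(x : ℂ), cycloField_mono hN hN dvd_rfl x.2⟩ : cycloField N) = x :=
        Subtype.ext rfl
      rw [hx] at this
      exact this
    refine Algebra.adjoin_mono ?_ h1
    rintro y hy
    rw [Set.mem_singleton_iff] at hy
    subst hy
    exact ⟨N, rfl, hN, by
      refine Subtype.ext ?_
      push_cast
      exact hζ.pow_eq_one⟩

lemma exists_aut {N : ℕ} (hN : N ≠ 0) {t : ℕ} (ht : t.Coprime N) :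
    ∃ σ : cycloField N ≃ₐ[ℚ] cycloField N,
      ∀ x : cycloField N, x ^ N = 1 → σ x = x ^ t := by
  haveI := cyclo_ext hN
  haveI : NeZero N := ⟨hN⟩
  set N' : ℕ+ := ⟨N, Nat.pos_of_ne_zero hN⟩ with hN'def
  have irr : Irreducible (Polynomial.cyclotomic N ℚ) :=
    Polynomial.cyclotomic.irreducible_rat N'.pos
  set u : (ZMod N)ˣ := ZMod.unitOfCoprime t ht with hudef
  set σ := (IsCyclotomicExtension.autEquivPow (cycloField N) irr).symm u with hσdef
  have hspec : (IsCyclotomicExtension.autEquivPow (cycloField N) irr) σ = u :=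
    (IsCyclotomicExtension.autEquivPow (cycloField N) irr).apply_symm_apply u
  set ζ₀ := IsCyclotomicExtension.zeta N ℚ (cycloField N) with hζ₀def
  have hζ₀ : IsPrimitiveRoot ζ₀ N := IsCyclotomicExtension.zeta_spec N ℚ (cycloField N)
  have hz : σ ζ₀ = ζ₀ ^ t := by
    have h1 := hζ₀.autToPow_spec ℚ σ
    have h2 : (hζ₀.autToPow ℚ) σ = u := by
      rw [← hspec]
      rfl
    rw [← h1, h2]
    refine pow_eq_of_modEq hζ₀.pow_eq_one ?_
    show ((u : ZMod N)).val ≡ t [MOD N]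
    rw [hudef]
    show ((t : ZMod N)).val ≡ t [MOD N]
    rw [ZMod.val_natCast]
    exact (Nat.mod_mod_of_dvd t dvd_rfl) ▸ (Nat.mod_modEq t N)
  refine ⟨σ, fun x hx => ?_⟩
  obtain ⟨i, hi, rfl⟩ := hζ₀.eq_pow_of_pow_eq_one hx
  rw [map_pow, hz, ← pow_mul, ← pow_mul, mul_comm]

lemma sigma_fix {m N : ℕ} (hm : m ≠ 0) (hN : N ≠ 0) (hmN : m ∣ N)
    (σ : cycloField N ≃ₐ[ℚ] cycloField N) {t : ℕ}
    (hσ : ∀ x : cycloField N, x ^ N = 1 → σ x = x ^ t) (ht : t ≡ 1 [MOD m])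
    {z : ℂ} (hz : z ∈ cycloField m) :
    σ ⟨z, cycloField_mono hm hN hmN hz⟩ = ⟨z, cycloField_mono hm hN hmN hz⟩ := by
  set w := zLift hm hN hmN with hwdef
  have hwm : w ^ m = 1 := by
    refine Subtype.ext ?_
    push_cast
    exact (zC_prim hm).pow_eq_one
  have hwN : w ^ N = 1 := by
    obtain ⟨k, rfl⟩ := hmN
    rw [pow_mul, hwm, one_pow]
  have hfixw : σ w = w := by
    rw [hσ w hwN, pow_eq_of_modEq hwm ht, pow_one]
  have hfix : ∀ y ∈ Algebra.adjoin ℚ ({w} : Set (cycloField N)), σ y = y := by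
    intro y hy
    induction hy using Algebra.adjoin_induction with
    | mem x hx => rw [Set.mem_singleton_iff] at hx; rw [hx]; exact hfixw
    | algebraMap r => exact σ.commutes r
    | add x y _ _ hx hy => rw [map_add, hx, hy]
    | mul x y _ _ hx hy => rw [map_mul, hx, hy]
  exact hfix _ (mem_adjoin_lift hm hN hmN hz)

end TGMD
namespace TGMD

lemma charZero_cyclo (N : ℕ) : CharZero (cycloField N) :=
  ⟨fun a b h => Nat.cast_injective (R := ℂ) (by
    have := congrArg (Subtype.val : cycloField N → ℂ) h
    push_cast at this
    exact_mod_cast this)⟩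

lemma pow_eq_one_of_dvd {G : Type*} [Monoid G] {x : G} {d n : ℕ} (h : x ^ d = 1)
    (hdn : d ∣ n) : x ^ n = 1 := by
  obtain ⟨k, rfl⟩ := hdn
  rw [pow_mul, h, one_pow]

lemma gauss_sq {p : ℕ} (hp : p.Prime) (hodd : p ≠ 2) [Fact p.Prime] [NeZero p] {F : Type*} [Field F]
    [CharZero F] {ζ : F} (hζ : IsPrimitiveRoot ζ p) (hζ1 : ζ ^ p = 1) :
    gaussSum ((quadraticChar (ZMod p)).ringHomComp (Int.castRingHom F))
        (AddChar.zmodChar p hζ1) ^ 2 = ((pStar p : ℤ) : F) := by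
  have hψ : (AddChar.zmodChar p hζ1).IsPrimitive :=
    AddChar.zmodChar_primitive_of_primitive_root p hζ
  have hring : ringChar (ZMod p) ≠ 2 := by
    rw [ZMod.ringChar_zmod_n]; exact hodd
  have hχ1 : (quadraticChar (ZMod p)).ringHomComp (Int.castRingHom F) ≠ 1 :=
    (MulChar.ringHomComp_ne_one_iff Int.cast_injective).mpr (quadraticChar_ne_one hring)
  have hχq : ((quadraticChar (ZMod p)).ringHomComp (Int.castRingHom F)).IsQuadratic :=
    (quadraticChar_isQuadratic (ZMod p)).comp _
  have hsq := gaussSum_sq hχ1 hχq hψ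
  rw [hsq]
  have hm1 : ((quadraticChar (ZMod p)).ringHomComp (Int.castRingHom F)) (-1)
      = ((quadraticChar (ZMod p) (-1) : ℤ) : F) := rfl
  rw [hm1, quadraticChar_neg_one hring, ZMod.card]
  have hp2 : p % 2 = 1 := Nat.odd_iff.mp (hp.odd_of_ne_two hodd)
  rw [ZMod.χ₄_nat_eq_if_mod_four, pStar]
  by_cases h4 : p % 4 = 1
  · have h2 : ¬ p % 2 = 0 := by omega
    simp [h4, h2]
  · have h2 : ¬ p % 2 = 0 := by omega
    simp only [h2, if_false, h4, if_false]
    push_cast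
    ring

lemma gauss_aut {p : ℕ} (hp : p.Prime) [Fact p.Prime] [NeZero p] {F : Type*} [Field F] [Algebra ℚ F]
    {ζ : F} (hζ1 : ζ ^ p = 1) (σ : F ≃ₐ[ℚ] F) {t : ℕ}
    (hσ : σ ζ = ζ ^ t) (ht : ¬ p ∣ t) :
    ((quadraticChar (ZMod p) ((t : ZMod p)) : ℤ) : F) *
      σ (gaussSum ((quadraticChar (ZMod p)).ringHomComp (Int.castRingHom F))
          (AddChar.zmodChar p hζ1))
      = gaussSum ((quadraticChar (ZMod p)).ringHomComp (Int.castRingHom F))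
          (AddChar.zmodChar p hζ1) := by
  set χ := (quadraticChar (ZMod p)).ringHomComp (Int.castRingHom F) with hχdef
  set ψ := AddChar.zmodChar p hζ1 with hψdef
  have hstep : σ (gaussSum χ ψ) = gaussSum χ (ψ.mulShift ((t : ZMod p))) := by
    rw [gaussSum, gaussSum, map_sum]
    refine Finset.sum_congr rfl fun a _ => ?_
    rw [map_mul]
    congr 1
    · rw [hχdef, MulChar.ringHomComp_apply]
      exact map_intCast σ _
    · rw [AddChar.mulShift_apply, hψdef, AddChar.zmodChar_apply, map_pow, hσ, ← pow_mul]
      have : ((t : ZMod p) * a) = (((t * a.val : ℕ) : ZMod p)) := by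
        push_cast
        rw [ZMod.natCast_val, ZMod.cast_id]
      rw [this, AddChar.zmodChar_apply']
  have hco : t.Coprime p := Nat.coprime_comm.mp (hp.coprime_iff_not_dvd.mpr ht)
  set tu : (ZMod p)ˣ := ZMod.unitOfCoprime t hco with htudef
  have hcoe : ((tu : (ZMod p)ˣ) : ZMod p) = (t : ZMod p) := ZMod.coe_unitOfCoprime t hco
  have hms := gaussSum_mulShift χ ψ tu
  rw [hcoe] at hms
  rw [hstep]
  have : χ ((t : ZMod p)) = ((quadraticChar (ZMod p) ((t : ZMod p)) : ℤ) : F) := rfl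
  rw [← this]
  exact hms

lemma quartic_contra1 {F : Type*} [Field F] [Algebra ℚ F] [CharZero F] (σ : F ≃ₐ[ℚ] F) {z w : F}
    (hz : σ z = z) (hw : σ w = -w) (hzw : z ^ 2 = w ^ 2) (hz0 : z ≠ 0) : False := by
  have hw0 : w ≠ 0 := by
    rintro rfl
    apply hz0
    have h0 : z ^ 2 = 0 := by rw [hzw]; ring
    exact pow_eq_zero_iff (by norm_num : (2:ℕ) ≠ 0) |>.mp h0
  set u := z / w with hudef
  have hu : u ^ 2 = 1 := by
    rw [hudef, div_pow, hzw, div_self (pow_ne_zero _ hw0)]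
  have hu1 : u = 1 ∨ u = -1 := by
    rw [← mul_self_eq_one_iff]
    rw [← sq]
    exact hu
  have hufix : σ u = u := by
    rcases hu1 with h | h <;> rw [h] <;> simp
  have hneg : σ u = -u := by
    rw [hudef, map_div₀, hz, hw, div_neg]
  have hu0 : u ≠ 0 := div_ne_zero hz0 hw0
  rw [hufix] at hneg
  have : (2 : F) * u = 0 := by linear_combination hneg
  rcases mul_eq_zero.mp this with h | h
  · exact two_ne_zero h
  · exact hu0 h

lemma quartic_contra2 {F : Type*} [Field F] [Algebra ℚ F] [CharZero F] (σ : F ≃ₐ[ℚ] F) {z w i : F}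
    (hz : σ z = z) (hw : σ w = -w) (hi : σ i = i) (hi2 : i ^ 2 = -1)
    (hzw : z ^ 2 = -w ^ 2) (hz0 : z ≠ 0) : False := by
  refine quartic_contra1 σ hz (w := w * i) ?_ ?_ hz0
  · rw [map_mul, hw, hi, neg_mul]
  · rw [mul_pow, hi2, hzw]
    ring

lemma lift_sq_eq {m N : ℕ} (hm : m ≠ 0) (hN : N ≠ 0) (hmN : m ∣ N)
    {z : ℂ} (hz : z ∈ cycloField m) {r : ℚ} (hr : z ^ 2 = (r : ℂ)) :
    (⟨z, cycloField_mono hm hN hmN hz⟩ : cycloField N) ^ 2 = (r : cycloField N) := by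
  refine Subtype.ext ?_
  push_cast
  exact hr

/-- Core negative lemma, odd primes. -/
lemma B1 {p M : ℕ} (hp : p.Prime) (hpodd : p ≠ 2) (hM : M ≠ 0) (h4 : 4 ∣ M)
    (hpM : ¬ p ∣ M) {ε : ℚ} (hε : ε = 1 ∨ ε = -1) (hS : S M (ε * p)) : False := by
  haveI : Fact p.Prime := ⟨hp⟩
  haveI : NeZero p := ⟨hp.ne_zero⟩
  obtain ⟨z, hzmem, hz2⟩ := hS
  have hN0 : M * p ≠ 0 := Nat.mul_ne_zero hM hp.ne_zero
  have hMN : M ∣ M * p := dvd_mul_right M p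
  have hpN : p ∣ M * p := dvd_mul_left p M
  have h4N : 4 ∣ M * p := h4.trans hMN
  haveI : CharZero (cycloField (M * p)) := charZero_cyclo (M * p)
  -- nonresidue
  obtain ⟨g₀, hg₀⟩ := quadraticChar_exists_neg_one (F := ZMod p)
    (by rw [ZMod.ringChar_zmod_n]; exact hpodd)
  have hg0 : g₀ ≠ 0 := by
    intro h
    rw [h, quadraticChar_zero] at hg₀
    norm_num at hg₀
  -- CRT
  have hcop : Nat.Coprime M p := Nat.coprime_comm.mp (hp.coprime_iff_not_dvd.mpr hpM)
  obtain ⟨t, ht1, ht2⟩ := Nat.chineseRemainder hcop 1 g₀.val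
  have htp : ¬ p ∣ t := by
    intro hdvd
    have h1 : t % p = 0 := Nat.dvd_iff_mod_eq_zero.mp hdvd
    have h2 : g₀.val % p = g₀.val := Nat.mod_eq_of_lt (ZMod.val_lt g₀)
    have h3 : t % p = g₀.val % p := ht2
    rw [h1, h2] at h3
    exact hg0 ((ZMod.val_eq_zero g₀).mp h3.symm)
  have htM : t.Coprime M := by
    rcases eq_or_ne M 1 with rfl | hM1
    · exact Nat.coprime_one_right t
    · have hM2 : 1 < M := by
        rcases Nat.lt_or_ge M 2 with h | h
        · interval_cases M <;> simp_all
        · omega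
      have h1M : 1 % M = 1 := Nat.mod_eq_of_lt hM2
      have htmod : t % M = 1 := by
        have h3 : t % M = 1 % M := ht1
        rw [h1M] at h3
        exact h3
      have : Nat.gcd M t = 1 := by
        rw [Nat.gcd_rec M t, htmod]
        exact Nat.gcd_one_left M
      exact Nat.coprime_comm.mp this
  have htN : t.Coprime (M * p) := Nat.Coprime.mul_right htM
    (Nat.coprime_comm.mp (hp.coprime_iff_not_dvd.mpr htp))
  obtain ⟨σ, hσ⟩ := exists_aut hN0 htN
  -- fixed lifted z
  set z' : cycloField (M * p) := ⟨z, cycloField_mono hM hN0 hMN hzmem⟩ with hz'def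
  have hσz : σ z' = z' := sigma_fix hM hN0 hMN σ hσ ht1 hzmem
  -- zeta_p
  set ζp : cycloField (M * p) := zLift hp.ne_zero hN0 hpN with hζpdef
  have hζp : IsPrimitiveRoot ζp p :=
    IsPrimitiveRoot.coe_submonoidClass_iff.mp (zC_prim hp.ne_zero)
  have hζp1 : ζp ^ p = 1 := hζp.pow_eq_one
  have hζpN : ζp ^ (M * p) = 1 := pow_eq_one_of_dvd hζp1 hpN
  have hσζp : σ ζp = ζp ^ t := hσ ζp hζpN
  -- gauss sum
  set g := gaussSum ((quadraticChar (ZMod p)).ringHomComp (Int.castRingHom (cycloField (M * p))))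
      (AddChar.zmodChar p hζp1) with hgdef
  have hg2 : g ^ 2 = ((pStar p : ℤ) : cycloField (M * p)) := gauss_sq hp hpodd hζp hζp1
  have hgaut := gauss_aut hp hζp1 σ hσζp htp
  have hχt : (quadraticChar (ZMod p) ((t : ZMod p)) : ℤ) = -1 := by
    have hcast : ((t : ℕ) : ZMod p) = g₀ := by
      rw [(ZMod.natCast_eq_natCast_iff t g₀.val p).mpr ht2, ZMod.natCast_val, ZMod.cast_id]
    rw [hcast]
    exact hg₀
  have hσg : σ g = -g := by
    rw [hχt] at hgaut
    push_cast at hgaut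
    linear_combination -hgaut
  -- i
  set i' : cycloField (M * p) := zLift (by norm_num) hN0 h4N with hi'def
  have hi2 : i' ^ 2 = -1 := by
    refine Subtype.ext ?_
    push_cast
    exact zC4_sq
  have hi4 : i' ^ 4 = 1 := by
    rw [show (4 : ℕ) = 2 * 2 from rfl, pow_mul, hi2]
    norm_num
  have hiN : i' ^ (M * p) = 1 := pow_eq_one_of_dvd hi4 h4N
  have hσi : σ i' = i' := by
    rw [hσ i' hiN, pow_eq_of_modEq hi4 (Nat.ModEq.of_dvd h4 ht1), pow_one]
  -- z'^2
  have hz'2 : z' ^ 2 = ((ε * p : ℚ) : cycloField (M * p)) := lift_sq_eq hM hN0 hMN hzmem hz2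
  have hεp : (ε * p : ℚ) ≠ 0 := by
    have hp' : (p : ℚ) ≠ 0 := Nat.cast_ne_zero.mpr hp.ne_zero
    rcases hε with rfl | rfl <;> simpa using hp'
  have hz0 : z' ≠ 0 := by
    intro h
    apply hεp
    apply Rat.cast_injective (α := cycloField (M * p))
    rw [← hz'2, h]
    norm_num
  -- combine: z'^2 = ± g^2
  have hsplit : z' ^ 2 = g ^ 2 ∨ z' ^ 2 = -g ^ 2 := by
    rw [hg2, hz'2, pStar]
    rcases hε with rfl | rfl <;> split <;> [left; right; right; left] <;> push_cast <;> ring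
  rcases hsplit with h | h
  · exact quartic_contra1 σ hσz hσg h hz0
  · exact quartic_contra2 σ hσz hσg hσi hi2 h hz0

end TGMD
namespace TGMD

lemma coprime_of_modEq_one {t M : ℕ} (h : t ≡ 1 [MOD M]) : t.Coprime M := by
  rcases Nat.eq_zero_or_pos M with rfl | hM
  · have h1 : t = 1 := by simpa [Nat.ModEq] using h
    simp [h1, Nat.Coprime]
  · rcases eq_or_ne M 1 with rfl | hM1
    · exact Nat.coprime_one_right t
    · have hM2 : 1 < M := by omega
      have htmod : t % M = 1 := by
        have h3 : t % M = 1 % M := h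
        rwa [Nat.mod_eq_of_lt hM2] at h3
      have hg : Nat.gcd M t = 1 := by
        rw [Nat.gcd_rec M t, htmod]
        exact Nat.gcd_one_left M
      exact Nat.coprime_comm.mp hg

lemma B2a {M : ℕ} (hM4 : M % 4 = 2) (hS : S M (-1)) : False := by
  have hM : M ≠ 0 := by omega
  obtain ⟨z, hzmem, hz2⟩ := hS
  have hModd : (M / 2) % 2 = 1 := by omega
  have hN0 : 4 * (M / 2) ≠ 0 := by omega
  have hMN : M ∣ 4 * (M / 2) := ⟨2, by omega⟩
  have h4N : (4 : ℕ) ∣ 4 * (M / 2) := dvd_mul_right _ _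
  haveI : CharZero (cycloField (4 * (M / 2))) := charZero_cyclo _
  have h2co : Nat.Coprime 2 (M / 2) :=
    (Nat.prime_two.coprime_iff_not_dvd).mpr (by omega)
  have hcop : Nat.Coprime 4 (M / 2) := by
    have := Nat.Coprime.pow_left 2 h2co
    simpa using this
  obtain ⟨t, ht4, htM₀⟩ := Nat.chineseRemainder hcop 3 1
  have ht4' : t % 4 = 3 := by
    have h3 : t % 4 = 3 % 4 := ht4
    simpa using h3
  have ht2 : t ≡ 1 [MOD 2] := by
    show t % 2 = 1 % 2
    omega
  have ht1 : t ≡ 1 [MOD M] := by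
    have hcomb := (Nat.modEq_and_modEq_iff_modEq_mul h2co).mp ⟨ht2, htM₀⟩
    have hMeq : 2 * (M / 2) = M := by omega
    rwa [hMeq] at hcomb
  have htN : t.Coprime (4 * (M / 2)) := by
    refine Nat.Coprime.mul_right ?_ (coprime_of_modEq_one htM₀)
    have h2t : Nat.Coprime t 2 :=
      Nat.coprime_comm.mp ((Nat.prime_two.coprime_iff_not_dvd).mpr (by omega))
    have := Nat.Coprime.pow_right 2 h2t
    simpa using this
  obtain ⟨σ, hσ⟩ := exists_aut hN0 htN
  set z' : cycloField (4 * (M / 2)) := ⟨z, cycloField_mono hM hN0 hMN hzmem⟩ with hz'def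
  have hσz : σ z' = z' := sigma_fix hM hN0 hMN σ hσ ht1 hzmem
  set i' : cycloField (4 * (M / 2)) := zLift (by norm_num) hN0 h4N with hi'def
  have hi2 : i' ^ 2 = -1 := by
    refine Subtype.ext ?_
    push_cast
    exact zC4_sq
  have hi4 : i' ^ 4 = 1 := by
    have h44 : i' ^ 4 = (i' ^ 2) ^ 2 := by ring
    rw [h44, hi2]
    norm_num
  have hiN : i' ^ (4 * (M / 2)) = 1 := pow_eq_one_of_dvd hi4 h4N
  have hσi : σ i' = -i' := by
    rw [hσ i' hiN, pow_eq_of_modEq hi4 ht4,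
      show (3 : ℕ) = 2 + 1 from rfl, pow_add, hi2, pow_one, neg_one_mul]
  have hz'2 : z' ^ 2 = ((-1 : ℚ) : cycloField (4 * (M / 2))) :=
    lift_sq_eq hM hN0 hMN hzmem hz2
  have hz'2' : z' ^ 2 = i' ^ 2 := by
    rw [hz'2, hi2]
    push_cast
    ring
  have hz0 : z' ≠ 0 := by
    intro h
    have : ((-1 : ℚ) : cycloField (4 * (M / 2))) = 0 := by
      rw [← hz'2, h]; norm_num
    norm_num at this
  exact quartic_contra1 σ hσz hσi hz'2' hz0

lemma B2b {M : ℕ} (hM0 : M ≠ 0) (h8 : ¬ (8 : ℕ) ∣ M) {ε : ℚ} (hε : ε = 1 ∨ ε = -1)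
    (hS : S M (ε * 2)) : False := by
  obtain ⟨z, hzmem, hz2⟩ := hS
  set k := M.factorization 2 with hkdef
  have hk2 : k ≤ 2 := by
    by_contra hgt
    push_neg at hgt
    apply h8
    have h3 : (2 : ℕ) ^ 3 ∣ M := (Nat.Prime.pow_dvd_iff_le_factorization Nat.prime_two hM0).mpr
      (by omega)
    simpa using h3
  have hModd : ¬ (2 : ℕ) ∣ (M / 2 ^ k) := Nat.not_dvd_ordCompl Nat.prime_two hM0
  have hM₀0 : M / 2 ^ k ≠ 0 := (Nat.ordCompl_pos 2 hM0).ne'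
  have hMeq : 2 ^ k * (M / 2 ^ k) = M := Nat.ordProj_mul_ordCompl_eq_self M 2
  have hN0 : 8 * (M / 2 ^ k) ≠ 0 := by positivity
  have hMN : M ∣ 8 * (M / 2 ^ k) := by
    have hstep : 2 ^ k * (M / 2 ^ k) ∣ 8 * (M / 2 ^ k) :=
      Nat.mul_dvd_mul_right (by
        have h23 : (2:ℕ) ^ k ∣ 2 ^ 3 := pow_dvd_pow 2 (by omega)
        simpa using h23) _
    rwa [hMeq] at hstep
  have h8N : (8 : ℕ) ∣ 8 * (M / 2 ^ k) := dvd_mul_right _ _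
  haveI : CharZero (cycloField (8 * (M / 2 ^ k))) := charZero_cyclo _
  have h2co : Nat.Coprime 2 (M / 2 ^ k) := (Nat.prime_two.coprime_iff_not_dvd).mpr hModd
  have hcop : Nat.Coprime 8 (M / 2 ^ k) := by
    have := Nat.Coprime.pow_left 3 h2co
    simpa using this
  obtain ⟨t, ht8, htM₀⟩ := Nat.chineseRemainder hcop 5 1
  have ht8' : t % 8 = 5 := by
    have h3 : t % 8 = 5 % 8 := ht8
    simpa using h3
  have ht1 : t ≡ 1 [MOD M] := by
    have ht2k : t ≡ 1 [MOD 2 ^ k] := by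
      refine Nat.ModEq.of_dvd ?_ (show t ≡ 1 [MOD 4] by show t % 4 = 1 % 4; omega)
      have : (2:ℕ) ^ k ∣ 2 ^ 2 := pow_dvd_pow 2 hk2
      simpa using this
    have hcomb := (Nat.modEq_and_modEq_iff_modEq_mul
      (Nat.Coprime.pow_left k h2co)).mp ⟨ht2k, htM₀⟩
    rwa [hMeq] at hcomb
  have htN : t.Coprime (8 * (M / 2 ^ k)) := by
    refine Nat.Coprime.mul_right ?_ (coprime_of_modEq_one htM₀)
    have h2t : Nat.Coprime t 2 :=
      Nat.coprime_comm.mp ((Nat.prime_two.coprime_iff_not_dvd).mpr (by omega))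
    have := Nat.Coprime.pow_right 3 h2t
    simpa using this
  obtain ⟨σ, hσ⟩ := exists_aut hN0 htN
  set z' : cycloField (8 * (M / 2 ^ k)) := ⟨z, cycloField_mono hM0 hN0 hMN hzmem⟩ with hz'def
  have hσz : σ z' = z' := sigma_fix hM0 hN0 hMN σ hσ ht1 hzmem
  set ζ8 : cycloField (8 * (M / 2 ^ k)) := zLift (by norm_num) hN0 h8N with hζ8def
  have h84 : ζ8 ^ 4 = -1 := by
    refine Subtype.ext ?_
    push_cast
    exact zC8_pow4
  have h88 : ζ8 ^ 8 = 1 := by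
    have h82 : ζ8 ^ 8 = (ζ8 ^ 4) ^ 2 := by ring
    rw [h82, h84]
    norm_num
  have h8zero : ζ8 ≠ 0 := by
    intro h
    rw [h] at h88
    simp at h88
  have h8N1 : ζ8 ^ (8 * (M / 2 ^ k)) = 1 := pow_eq_one_of_dvd h88 h8N
  have hσζ8 : σ ζ8 = -ζ8 := by
    rw [hσ ζ8 h8N1, pow_eq_of_modEq h88 ht8,
      show (5 : ℕ) = 4 + 1 from rfl, pow_add, h84, pow_one, neg_one_mul]
  set w := ζ8 + ζ8⁻¹ with hwdef
  have hinv : ζ8⁻¹ = -ζ8 ^ 3 :=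
    inv_eq_of_mul_eq_one_right (by linear_combination -h84)
  have hw2 : w ^ 2 = 2 := by
    rw [hwdef, hinv]
    linear_combination (ζ8 ^ 2 - 2) * h84
  have hσw : σ w = -w := by
    rw [hwdef, map_add, map_inv₀, hσζ8, inv_neg, hinv]
    ring
  set i' := ζ8 ^ 2 with hi'def
  have hi2 : i' ^ 2 = -1 := by
    rw [hi'def, ← pow_mul]
    exact h84
  have hσi : σ i' = i' := by
    rw [hi'def, map_pow, hσζ8]
    ring
  have hz'2 : z' ^ 2 = ((ε * 2 : ℚ) : cycloField (8 * (M / 2 ^ k))) :=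
    lift_sq_eq hM0 hN0 hMN hzmem hz2
  have hz0 : z' ≠ 0 := by
    intro h
    rw [h] at hz'2
    have h0 : ((ε * 2 : ℚ) : cycloField (8 * (M / 2 ^ k))) = 0 := by
      rw [← hz'2]; norm_num
    have h1 : (ε * 2 : ℚ) = 0 := by exact_mod_cast h0
    rcases hε with rfl | rfl <;> norm_num at h1
  rcases hε with rfl | rfl
  · refine quartic_contra1 σ hσz hσw ?_ hz0
    rw [hz'2, hw2]
    push_cast
    ring
  · refine quartic_contra2 σ hσz hσw hσi hi2 ?_ hz0
    rw [hz'2, hw2]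
    push_cast
    ring

end TGMD
namespace TGMD

lemma lemB {b : ℤ} (hsf : Squarefree b) {m : ℕ} (hm0 : m ≠ 0) (h2 : 2 ∣ m)
    (hS : S m ((b : ℤ) : ℚ)) : (if b % 4 = 1 then b else 4 * b) ∣ (m : ℤ) := by
  have hb0 : b ≠ 0 := hsf.ne_zero
  have hoddp : ∀ p : ℕ, p.Prime → p ≠ 2 → (p : ℤ) ∣ b → p ∣ m := by
    intro p hp hpodd hpb
    by_contra hpm
    obtain ⟨c, hbc⟩ := hpb
    have hc0 : c ≠ 0 := fun h => hb0 (by rw [hbc, h, mul_zero])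
    have hsfc : Squarefree c := hsf.squarefree_of_dvd ⟨(p : ℤ), by rw [hbc]; ring⟩
    have hcn0 : c.natAbs ≠ 0 := by simpa using hc0
    have hM0 : 8 * m * c.natAbs ≠ 0 := by
      refine Nat.mul_ne_zero (Nat.mul_ne_zero (by norm_num) hm0) hcn0
    have h4M : 4 ∣ 8 * m * c.natAbs := ⟨2 * m * c.natAbs, by ring⟩
    have h8M : 8 ∣ 8 * m * c.natAbs := ⟨m * c.natAbs, by ring⟩
    have hmM : m ∣ 8 * m * c.natAbs := ⟨8 * c.natAbs, by ring⟩
    have hpM : ¬ p ∣ 8 * m * c.natAbs := by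
      intro hd
      rcases (Nat.Prime.dvd_mul hp).mp hd with h1 | h1
      · rcases (Nat.Prime.dvd_mul hp).mp h1 with h2' | h2'
        · refine hpodd ?_
          have h3 : p ∣ 2 ^ 3 := by simpa using h2'
          exact (Nat.prime_dvd_prime_iff_eq hp Nat.prime_two).mp (hp.dvd_of_dvd_pow h3)
        · exact hpm h2'
      · have hpcZ : (p : ℤ) ∣ c :=
          (Int.natCast_dvd_natCast.mpr h1).trans (Int.natAbs_dvd.mpr dvd_rfl)
        obtain ⟨d, hd⟩ := hpcZ
        have hu : IsUnit ((p : ℤ)) := hsf (p : ℤ) ⟨d, by rw [hbc, hd]; ring⟩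
        rw [Int.isUnit_iff] at hu
        have := hp.two_le
        rcases hu with h | h <;> omega
    have hSb : S (8 * m * c.natAbs) ((b : ℤ) : ℚ) := hS.of_dvd hm0 hM0 hmM
    have hSc : S (8 * m * c.natAbs) ((c : ℤ) : ℚ) :=
      S_of_squarefree hsfc hM0 (dvd_mul_left _ _) h8M
    have hmul := hSb.mul hSc
    have hrw : ((b : ℤ) : ℚ) * ((c : ℤ) : ℚ) = ((c : ℚ)) ^ 2 * ((1 : ℚ) * p) := by
      rw [hbc]; push_cast; ring
    rw [hrw] at hmul
    have hfinal := hmul.of_mul_sq (q := (c : ℚ)) (Int.cast_ne_zero.mpr hc0)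
    exact B1 hp hpodd hM0 h4M hpM (Or.inl rfl) hfinal
  have hodddvd : ∀ c : ℤ, c ∣ b → c % 2 = 1 → c.natAbs ∣ m := by
    intro c hcb hcodd
    have hsfc : Squarefree c := hsf.squarefree_of_dvd hcb
    have hsfn : Squarefree c.natAbs := Int.squarefree_natAbs.mpr hsfc
    have hprod := Nat.prod_primeFactors_of_squarefree hsfn
    rw [← hprod]
    refine Finset.prod_primes_dvd m ?_ ?_
    · intro q hq; exact (Nat.prime_of_mem_primeFactors hq).prime
    · intro q hq
      have hqp := Nat.prime_of_mem_primeFactors hq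
      have hqd : q ∣ c.natAbs := Nat.dvd_of_mem_primeFactors hq
      have hqZ : (q : ℤ) ∣ c :=
        (Int.natCast_dvd_natCast.mpr hqd).trans (Int.natAbs_dvd.mpr dvd_rfl)
      have hq2 : q ≠ 2 := by
        intro h
        rw [h] at hqZ
        omega
      exact hoddp q hqp hq2 (hqZ.trans hcb)
  rcases Int.even_or_odd b with hbe | hbo
  · -- even case
    obtain ⟨c, hcc⟩ := hbe
    have hb2c : b = 2 * c := by omega
    have h41 : ¬ b % 4 = 1 := by omega
    rw [if_neg h41]
    have hc0 : c ≠ 0 := by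
      intro h; apply hb0; omega
    have hcn0 : c.natAbs ≠ 0 := by simpa using hc0
    have hsfc : Squarefree c := hsf.squarefree_of_dvd ⟨2, by omega⟩
    have hcodd : c % 2 = 1 := by
      rcases Int.even_or_odd c with ⟨d, hd⟩ | ⟨d, hd⟩
      · exfalso
        have hnu : ¬ IsUnit (2 : ℤ) := by decide
        exact hnu (hsf 2 ⟨d, by omega⟩)
      · omega
    have hcnat : c.natAbs ∣ m := hodddvd c ⟨2, by omega⟩ hcodd
    have hcnodd : c.natAbs % 2 = 1 := by omega
    have hco8 : Nat.Coprime 8 c.natAbs := by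
      have h2c : Nat.Coprime 2 c.natAbs :=
        (Nat.prime_two.coprime_iff_not_dvd).mpr (by omega)
      have := Nat.Coprime.pow_left 3 h2c
      simpa using this
    have h8m : 8 ∣ m := by
      by_contra h8m
      have hM0 : m * c.natAbs ≠ 0 := Nat.mul_ne_zero hm0 hcn0
      have h8M : ¬ (8 : ℕ) ∣ m * c.natAbs := by
        intro hd
        exact h8m (Nat.Coprime.dvd_of_dvd_mul_right hco8 hd)
      have hSb' : S (m * c.natAbs) ((b : ℤ) : ℚ) := hS.of_dvd hm0 hM0 (dvd_mul_right _ _)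
      have hScs : S (m * c.natAbs) ((cStar c : ℤ) : ℚ) :=
        (S_cStar c hsfc hcodd).of_dvd hcn0 hM0 (dvd_mul_left _ _)
      have hmul := hSb'.mul hScs
      rcases cStar_cases c with hcs | hcs
      · have hrw : ((b : ℤ) : ℚ) * ((cStar c : ℤ) : ℚ) = ((c : ℚ)) ^ 2 * ((1 : ℚ) * 2) := by
          rw [hcs, hb2c]; push_cast; ring
        rw [hrw] at hmul
        exact B2b hM0 h8M (Or.inl rfl) (hmul.of_mul_sq (Int.cast_ne_zero.mpr hc0))
      · have hrw : ((b : ℤ) : ℚ) * ((cStar c : ℤ) : ℚ) = ((c : ℚ)) ^ 2 * ((-1 : ℚ) * 2) := by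
          rw [hcs, hb2c]; push_cast; ring
        rw [hrw] at hmul
        exact B2b hM0 h8M (Or.inr rfl) (hmul.of_mul_sq (Int.cast_ne_zero.mpr hc0))
    have hdvd8 : 8 * c.natAbs ∣ m := Nat.Coprime.mul_dvd_of_dvd_of_dvd hco8 h8m hcnat
    have hfin : ((4 * b).natAbs : ℤ) ∣ (m : ℤ) := by
      have hnat : (4 * b).natAbs = 8 * c.natAbs := by
        rw [hb2c, show (4 : ℤ) * (2 * c) = 8 * c from by ring, Int.natAbs_mul]
        norm_num
      rw [hnat]
      exact_mod_cast Int.natCast_dvd_natCast.mpr hdvd8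
    exact Int.natAbs_dvd.mp hfin
  · -- odd case
    obtain ⟨j, hj⟩ := hbo
    have hb2 : b % 2 = 1 := by omega
    have hnatdvd : b.natAbs ∣ m := hodddvd b dvd_rfl hb2
    by_cases h41 : b % 4 = 1
    · rw [if_pos h41]
      exact Int.natAbs_dvd.mp (Int.natCast_dvd_natCast.mpr hnatdvd)
    · rw [if_neg h41]
      have hbn0 : b.natAbs ≠ 0 := by simpa using hb0
      have hbnodd : b.natAbs % 2 = 1 := by omega
      have h4m : 4 ∣ m := by
        by_contra h4m
        have hm4 : m % 4 = 2 := by omega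
        have hM4 : (m * b.natAbs) % 4 = 2 := by
          rw [Nat.mul_mod, hm4]
          omega
        have hM0 : m * b.natAbs ≠ 0 := Nat.mul_ne_zero hm0 hbn0
        have hSb' : S (m * b.natAbs) ((b : ℤ) : ℚ) := hS.of_dvd hm0 hM0 (dvd_mul_right _ _)
        have hScs : S (m * b.natAbs) ((cStar b : ℤ) : ℚ) :=
          (S_cStar b hsf hb2).of_dvd hbn0 hM0 (dvd_mul_left _ _)
        rw [cStar, if_neg h41] at hScs
        have hmul := hSb'.mul hScs
        have hrw : ((b : ℤ) : ℚ) * ((-b : ℤ) : ℚ) = ((b : ℚ)) ^ 2 * (-1) := by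
          push_cast; ring
        rw [hrw] at hmul
        exact B2a hM4 (hmul.of_mul_sq (Int.cast_ne_zero.mpr hb0))
      have hco4 : Nat.Coprime 4 b.natAbs := by
        have h2b : Nat.Coprime 2 b.natAbs :=
          (Nat.prime_two.coprime_iff_not_dvd).mpr (by omega)
        have := Nat.Coprime.pow_left 2 h2b
        simpa using this
      have hmul4 : 4 * b.natAbs ∣ m := Nat.Coprime.mul_dvd_of_dvd_of_dvd hco4 h4m hnatdvd
      have hfin : ((4 * b).natAbs : ℤ) ∣ (m : ℤ) := by
        have hnat : (4 * b).natAbs = 4 * b.natAbs := by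
          rw [Int.natAbs_mul]; norm_num
        rw [hnat]
        exact_mod_cast Int.natCast_dvd_natCast.mpr hmul4
      exact Int.natAbs_dvd.mp hfin

end TGMD
namespace TGMD

lemma unique_sf {d b : ℤ} (hd : Squarefree d) (hb : Squarefree b) {t : ℚ}
    (h : (b : ℚ) = (d : ℚ) * t ^ 2) : d = b := by
  have hb0 : b ≠ 0 := hb.ne_zero
  have ht0 : t ≠ 0 := by
    rintro rfl
    apply hb0
    have h0 : (b : ℚ) = 0 := by rw [h]; ring
    exact_mod_cast h0
  have hden : ((t.den : ℚ)) ≠ 0 := Nat.cast_ne_zero.mpr t.den_ne_zero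
  have hkey : b * (t.den : ℤ) ^ 2 = d * t.num ^ 2 := by
    have h2 : (b : ℚ) * ((t.den : ℚ)) ^ 2 = (d : ℚ) * ((t.num : ℚ)) ^ 2 := by
      have h4 : ((t.num : ℚ)) = t * ((t.den : ℚ)) :=
        (div_eq_iff hden).mp (Rat.num_div_den t)
      rw [h, h4]
      ring
    exact_mod_cast h2
  have hco : IsCoprime t.num ((t.den : ℤ)) := by
    rw [Int.isCoprime_iff_gcd_eq_one]
    exact t.reduced
  have hn1 : t.num = 1 ∨ t.num = -1 := by
    have hdvd : t.num ^ 2 ∣ b * (t.den : ℤ) ^ 2 := by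
      rw [hkey]; exact Dvd.intro_left d rfl
    have hcop2 : IsCoprime (t.num ^ 2) (((t.den : ℤ)) ^ 2) := (hco.pow : _)
    have hdb : t.num ^ 2 ∣ b := hcop2.dvd_of_dvd_mul_right hdvd
    have hu : IsUnit t.num := hb t.num (by rw [← sq]; exact hdb)
    exact Int.isUnit_iff.mp hu
  have hq1 : (t.den : ℤ) = 1 := by
    have hdvd : ((t.den : ℤ)) ^ 2 ∣ d * t.num ^ 2 := by
      rw [← hkey]; exact Dvd.intro_left b rfl
    have hcop2 : IsCoprime (((t.den : ℤ)) ^ 2) (t.num ^ 2) := (hco.symm.pow : _)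
    have hdd : ((t.den : ℤ)) ^ 2 ∣ d := hcop2.dvd_of_dvd_mul_right hdvd
    have hu : IsUnit ((t.den : ℤ)) := hd _ (by rw [← sq]; exact hdd)
    rcases Int.isUnit_iff.mp hu with h1 | h1
    · exact h1
    · exfalso
      have := t.den_ne_zero
      omega
  have hn2 : t.num ^ 2 = 1 := by rcases hn1 with h1 | h1 <;> rw [h1] <;> norm_num
  rw [hq1, hn2] at hkey
  omega

lemma quadDisc_eq {b : ℤ} (hb : Squarefree b) :
    quadDisc ((b : ℤ) : ℚ) = if b % 4 = 1 then b else 4 * b := by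
  rw [quadDisc]
  have hex : ∃ d : ℤ, Squarefree d ∧ ∃ t : ℚ, ((b : ℤ) : ℚ) = (d : ℚ) * t ^ 2 :=
    ⟨b, hb, 1, by norm_num⟩
  rw [dif_pos hex]
  obtain ⟨hsf, t, ht⟩ := hex.choose_spec
  have hchoose : hex.choose = b := unique_sf hsf hb ht
  rw [hchoose]

lemma exists_sf_rep (x : ℚˣ) :
    ∃ (b : ℤ) (y : ℚˣ), Squarefree b ∧ (x : ℚ) = (b : ℚ) * ((y : ℚ)) ^ 2 := by
  have hq0 : (x : ℚ) ≠ 0 := x.ne_zero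
  have hden : (((x : ℚ).den : ℚ)) ≠ 0 := Nat.cast_ne_zero.mpr (x : ℚ).den_ne_zero
  obtain ⟨n, hn⟩ : ∃ n : ℤ, n = (x : ℚ).num * ((x : ℚ).den : ℤ) := ⟨_, rfl⟩
  have hn0 : n ≠ 0 := by
    rw [hn]
    exact mul_ne_zero (Rat.num_ne_zero.mpr hq0) (by exact_mod_cast (x : ℚ).den_ne_zero)
  obtain ⟨a, s, hs, ha⟩ := Nat.sq_mul_squarefree n.natAbs
  have hna0 : n.natAbs ≠ 0 := by simpa using hn0
  have hs0 : s ≠ 0 := by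
    intro h; rw [h] at hs; simp at hs; exact hna0 hs.symm
  obtain ⟨b, hb⟩ : ∃ b : ℤ, b = n.sign * (a : ℤ) := ⟨_, rfl⟩
  have hbabs : b.natAbs = a := by
    rw [hb, Int.natAbs_mul, Int.natAbs_sign_of_ne_zero hn0, one_mul, Int.natAbs_natCast]
  have hsfb : Squarefree b := by
    rw [← Int.squarefree_natAbs, hbabs]
    exact ha
  have h1 : (s : ℤ) ^ 2 * (a : ℤ) = (n.natAbs : ℤ) := by exact_mod_cast hs
  have hbs : b * (s : ℤ) ^ 2 = n := by
    rw [hb]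
    conv_rhs => rw [← Int.sign_mul_natAbs n, ← h1]
    ring
  have hy0 : ((s : ℚ) / ((x : ℚ).den : ℚ)) ≠ 0 :=
    div_ne_zero (Nat.cast_ne_zero.mpr hs0) hden
  refine ⟨b, Units.mk0 _ hy0, hsfb, ?_⟩
  have hnum : (((x : ℚ).num : ℚ)) = (x : ℚ) * (((x : ℚ).den : ℚ)) :=
    (div_eq_iff hden).mp (Rat.num_div_den (x : ℚ))
  have hgoal : (x : ℚ) * (((x : ℚ).den : ℚ)) ^ 2 = (b : ℚ) * ((s : ℚ)) ^ 2 := by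
    have hc : ((n : ℤ) : ℚ) = ((b * (s : ℤ) ^ 2 : ℤ) : ℚ) := by rw [hbs]
    rw [hn] at hc
    push_cast at hc
    rw [hnum] at hc
    push_cast
    linear_combination hc
  rw [Units.val_mk0, div_pow, mul_comm, div_mul_eq_mul_div, eq_comm,
    div_eq_iff (pow_ne_zero 2 hden)]
  push_cast
  linear_combination -hgoal

end TGMD

/-- **Proposition.** For even `m`,
`tildeΓ_{m,2} = {γ ∈ Γ(2) : disc(ℚ(√γ')) ∣ m}`. -/
theorem tildeGammaMD_two (Γ : Subgroup ℚˣ) (hFG : Γ.FG) (m : ℕ) (hm : 0 < m)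
    (h2 : 2 ∣ m) :
    tildeGammaMD Γ m 2 =
      {c | c ∈ GammaMod Γ 2 ∧
        ∃ b : ℤ, Squarefree b ∧
          (QuotientGroup.mk (intUnit b) : ℚˣ ⧸ powSubgroup 2) = c ∧
          quadDisc (b : ℚ) ∣ (m : ℤ)} := by
  have hm0 : m ≠ 0 := hm.ne'
  ext c
  constructor
  · rintro ⟨x, hmkx, ⟨γ, hγ, y, hxy⟩, z, hzmem, hz2⟩
    obtain ⟨b, y', hsf, hxb⟩ := TGMD.exists_sf_rep x
    have hb0 : b ≠ 0 := hsf.ne_zero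
    have hbQ0 : (b : ℚ) ≠ 0 := Int.cast_ne_zero.mpr hb0
    have hiu : ((intUnit b : ℚˣ) : ℚ) = (b : ℚ) := by
      rw [intUnit, dif_neg hbQ0, Units.val_mk0]
    constructor
    · refine Subgroup.mem_map.mpr ⟨γ, hγ, ?_⟩
      rw [QuotientGroup.mk'_apply, ← hmkx, QuotientGroup.eq]
      exact ⟨y, by rw [powMonoidHom_apply, hxy]; group⟩
    · refine ⟨b, hsf, ?_, ?_⟩
      · rw [← hmkx, QuotientGroup.eq]
        refine ⟨y', ?_⟩
        rw [powMonoidHom_apply]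
        refine Units.ext ?_
        rw [Units.val_mul, Units.val_inv_eq_inv_val, hiu, Units.val_pow_eq_pow_val]
        rw [hxb]
        field_simp
      · rw [TGMD.quadDisc_eq hsf]
        refine TGMD.lemB hsf hm0 h2 ?_
        have hy'0 : (((y' : ℚ)) : ℂ) ≠ 0 := by
          have : (y' : ℚ) ≠ 0 := y'.ne_zero
          exact_mod_cast this
        refine ⟨z / (((y' : ℚ)) : ℂ), div_mem hzmem (TGMD.ratCast_mem m _), ?_⟩
        have hxbC : (((x : ℚ)) : ℂ) = (((b : ℚ)) : ℂ) * ((((y' : ℚ)) : ℂ)) ^ 2 := by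
          have := congrArg (fun q : ℚ => (q : ℂ)) hxb
          push_cast at this ⊢
          exact this
        rw [div_pow, hz2, hxbC]
        field_simp
  · rintro ⟨hcG, b, hsf, hmkb, hD⟩
    obtain ⟨γ, hγ, hγc⟩ := Subgroup.mem_map.mp hcG
    have hb0 : b ≠ 0 := hsf.ne_zero
    have hbQ0 : (b : ℚ) ≠ 0 := Int.cast_ne_zero.mpr hb0
    have hiu : ((intUnit b : ℚˣ) : ℚ) = (b : ℚ) := by
      rw [intUnit, dif_neg hbQ0, Units.val_mk0]
    have hmkγ : (QuotientGroup.mk γ : ℚˣ ⧸ powSubgroup 2) = c := by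
      rw [← QuotientGroup.mk'_apply]
      exact hγc
    have hmk2 : (QuotientGroup.mk (intUnit b) : ℚˣ ⧸ powSubgroup 2) = QuotientGroup.mk γ := by
      rw [hmkb, ← hmkγ]
    rw [QuotientGroup.eq] at hmk2
    obtain ⟨y, hy⟩ := hmk2
    rw [powMonoidHom_apply] at hy
    refine ⟨intUnit b, hmkb, ⟨γ, hγ, y⁻¹, ?_⟩, ?_⟩
    · rw [inv_pow, hy]
      group
    · rw [TGMD.quadDisc_eq hsf] at hD
      obtain ⟨z, hzmem, hz2⟩ := TGMD.lemA hsf hm0 hD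
      refine ⟨z, hzmem, ?_⟩
      rw [hz2, hiu]
end

section
/- Let a ∈ ℚ, a > 0, a ≠ 1, with a = a₀^h where a₀ > 0 is not a perfect power of a rational number, and let Γ = ⟨−1,a⟩. Then for every integer m ≥ 1, |Γ(m)| = gcd(2,m)·m/gcd(m,h). -/
/- Common definitions: finitely generated multiplicative subgroups `Γ ⊆ ℚˣ`,
the quotients `Γ(n) = Γ·(ℚ*)ⁿ/(ℚ*)ⁿ`, the invariants `δ(γ)`, the group `tildeΓ(m)`,
the constants `A(Γ,m)` and `B_{Γ,k}`, and the density `ρ(Γ,m)`. -/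

open scoped Classical

private lemma card_closure_pair {G : Type*} [CommGroup G] (x y : G) (o₁ o₂ : ℕ)
    (hker : ∀ i j : ℤ, x ^ i * y ^ j = 1 ↔ (o₁ : ℤ) ∣ i ∧ (o₂ : ℤ) ∣ j) :
    Nat.card (Subgroup.closure ({x, y} : Set G)) = o₁ * o₂ := by
  classical
  have hx : ((zmultiplesHom (Additive G)) (Additive.ofMul x)) (o₁ : ℤ) = 0 := by
    have := (hker o₁ 0).mpr ⟨dvd_rfl, dvd_zero _⟩
    exact congrArg Additive.ofMul (by simpa using this : x ^ (o₁ : ℤ) = 1)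
  have hy : ((zmultiplesHom (Additive G)) (Additive.ofMul y)) (o₂ : ℤ) = 0 := by
    have := (hker 0 o₂).mpr ⟨dvd_zero _, dvd_rfl⟩
    exact congrArg Additive.ofMul (by simpa using this : y ^ (o₂ : ℤ) = 1)
  set ψ : ZMod o₁ × ZMod o₂ →+ Additive G :=
    (ZMod.lift o₁ ⟨(zmultiplesHom (Additive G)) (Additive.ofMul x), hx⟩).coprod
      (ZMod.lift o₂ ⟨(zmultiplesHom (Additive G)) (Additive.ofMul y), hy⟩) with hψdef
  have hψ : ∀ i j : ℤ, ψ ((i : ZMod o₁), (j : ZMod o₂)) = Additive.ofMul (x ^ i * y ^ j) := by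
    intro i j
    simp [hψdef, ofMul_zpow, ZMod.lift_coe]
  have hinj : Function.Injective ψ := by
    rw [injective_iff_map_eq_zero]
    rintro ⟨u, v⟩ huv
    obtain ⟨i, rfl⟩ := ZMod.intCast_surjective (n := o₁) u
    obtain ⟨j, rfl⟩ := ZMod.intCast_surjective (n := o₂) v
    rw [hψ i j] at huv
    have h1 : x ^ i * y ^ j = 1 := Additive.ofMul.injective huv
    obtain ⟨d1, d2⟩ := (hker i j).mp h1
    rw [Prod.mk_eq_zero]
    constructor
    · exact (ZMod.intCast_zmod_eq_zero_iff_dvd i o₁).mpr d1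
    · exact (ZMod.intCast_zmod_eq_zero_iff_dvd j o₂).mpr d2
  have hmem : ∀ g : G, g ∈ Subgroup.closure ({x, y} : Set G) ↔ Additive.ofMul g ∈ ψ.range := by
    intro g
    rw [Subgroup.mem_closure_pair]
    constructor
    · rintro ⟨i, j, rfl⟩
      exact ⟨((i : ZMod o₁), (j : ZMod o₂)), hψ i j⟩
    · rintro ⟨⟨u, v⟩, hp⟩
      obtain ⟨i, rfl⟩ := ZMod.intCast_surjective (n := o₁) u
      obtain ⟨j, rfl⟩ := ZMod.intCast_surjective (n := o₂) v
      exact ⟨i, j, Additive.ofMul.injective ((hψ i j).symm.trans hp)⟩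
  have e : (Subgroup.closure ({x, y} : Set G)) ≃ ψ.range :=
    { toFun := fun g => ⟨Additive.ofMul g.1, (hmem g.1).mp g.2⟩
      invFun := fun g => ⟨g.1.toMul, (hmem _).mpr g.2⟩
      left_inv := fun g => rfl
      right_inv := fun g => rfl }
  have e2 : (ψ.range : Type _) ≃ (ZMod o₁ × ZMod o₂) :=
    (Equiv.subtypeEquivRight (fun z => by
      simp [AddMonoidHom.mem_range, Set.mem_range, eq_comm])).trans
      (Equiv.ofInjective ψ hinj).symm
  rw [Nat.card_congr e, Nat.card_congr e2, Nat.card_prod, Nat.card_zmod, Nat.card_zmod]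

private lemma key_pow (a₀ : ℚ)
    (hnp : ∀ (b : ℚ) (k : ℕ), 2 ≤ k → a₀ ≠ b ^ k) (ha₀pos : 0 < a₀)
    (m : ℕ) (hm : 1 ≤ m) (n : ℕ) (q : ℚ) (hq : 0 < q) (heq : a₀ ^ n = q ^ m) :
    m ∣ n := by
  set g := Nat.gcd n m with hg
  have hgpos : 0 < g := Nat.gcd_pos_of_pos_right n hm
  set n' := n / g with hn'
  set m' := m / g with hm'
  have hgn : g ∣ n := Nat.gcd_dvd_left n m
  have hgm : g ∣ m := Nat.gcd_dvd_right n m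
  have h1 : a₀ ^ n' = q ^ m' := by
    have h2 : (a₀ ^ n') ^ g = (q ^ m') ^ g := by
      rw [← pow_mul, ← pow_mul, Nat.div_mul_cancel hgn, Nat.div_mul_cancel hgm, heq]
    have hxpos : 0 < a₀ ^ n' := pow_pos ha₀pos _
    have hypos : 0 < q ^ m' := pow_pos hq _
    rcases lt_trichotomy (a₀ ^ n') (q ^ m') with hlt | heq' | hgt
    · exact absurd h2 (ne_of_lt (pow_lt_pow_left₀ hlt hxpos.le hgpos.ne'))
    · exact heq'
    · exact absurd h2.symm (ne_of_lt (pow_lt_pow_left₀ hgt hypos.le hgpos.ne'))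
  -- now Bezout
  have hcop : Nat.Coprime n' m' := Nat.coprime_div_gcd_div_gcd hgpos
  have hbez : ∃ u v : ℤ, (n' : ℤ) * u + (m' : ℤ) * v = 1 := by
    refine ⟨Nat.gcdA n' m', Nat.gcdB n' m', ?_⟩
    have := Nat.gcd_eq_gcd_ab n' m'
    rw [hcop] at this
    simpa using this.symm
  obtain ⟨u, v, huv⟩ := hbez
  -- work in units
  set A : ℚˣ := Units.mk0 a₀ ha₀pos.ne' with hA
  set Q : ℚˣ := Units.mk0 q hq.ne' with hQ
  have hAQ : A ^ n' = Q ^ m' := by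
    ext
    push_cast [hA, hQ]
    exact h1
  have h2 : A ^ ((n' : ℤ) * u) = Q ^ (u * (m' : ℤ)) := by
    rw [mul_comm u, zpow_mul, zpow_mul, zpow_natCast, zpow_natCast, hAQ]
  have hb : (Q ^ u * A ^ v) ^ (m' : ℤ) = A := by
    rw [mul_zpow, ← zpow_mul, ← zpow_mul, ← h2, ← zpow_add,
      show (n' : ℤ) * u + v * (m' : ℤ) = 1 by linarith [huv], zpow_one]
  have hm'1 : m' = 1 := by
    by_contra hne
    have hm'pos : 0 < m' := Nat.div_pos (Nat.le_of_dvd hm hgm) hgpos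
    have h2m' : 2 ≤ m' := by omega
    refine hnp ((Q ^ u * A ^ v : ℚˣ) : ℚ) m' h2m' ?_
    have := congrArg (Units.val) hb.symm
    rw [zpow_natCast] at this
    simpa [hA] using this
  have hmg : m = g * m' := by rw [hm', Nat.mul_div_cancel' hgm]
  rw [hmg, hm'1, mul_one]
  exact hgn

/-- **`|⟨−1,a⟩(m)| = (2,m)·m/(m,h)`** for `a = a₀^h` with `a₀ > 0` not a perfect power. -/
theorem card_GammaMod_negOneA (a a₀ : ℚ) (h : ℕ)
    (ha : 0 < a) (ha1 : a ≠ 1) (ha₀pos : 0 < a₀)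
    (hnp : ∀ (b : ℚ) (k : ℕ), 2 ≤ k → a₀ ≠ b ^ k)
    (hh : 1 ≤ h) (hah : a = a₀ ^ h) :
    ∀ m : ℕ, 1 ≤ m →
      Nat.card (GammaMod (negOneAGroup a) m) = Nat.gcd 2 m * m / Nat.gcd m h := by
  intro m hm
  have han : a ≠ 0 := ha.ne'
  set ua : ℚˣ := Units.mk0 a han with hua
  have huaval : (ua : ℚ) = a := rfl
  -- the generating set
  have hS : {u : ℚˣ | (u : ℚ) = -1 ∨ (u : ℚ) = a} = ({-1, ua} : Set ℚˣ) := by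
    ext u
    simp only [Set.mem_setOf_eq, Set.mem_insert_iff, Set.mem_singleton_iff, Units.ext_iff,
      Units.val_neg, Units.val_one, huaval]
  have hmap : GammaMod (negOneAGroup a) m =
      Subgroup.closure {((QuotientGroup.mk' (powSubgroup m)) (-1)),
        ((QuotientGroup.mk' (powSubgroup m)) ua)} := by
    rw [GammaMod, negOneAGroup, hS, MonoidHom.map_closure, Set.image_pair]
  -- notation
  set g2 := Nat.gcd m h with hg2
  have hg2pos : 0 < g2 := Nat.gcd_pos_of_pos_left h hm
  have hg2m : g2 ∣ m := Nat.gcd_dvd_left m h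
  have hg2h : g2 ∣ h := Nat.gcd_dvd_right m h
  set m2 := m / g2 with hm2
  set h2 := h / g2 with hh2
  have hcop : Nat.Coprime m2 h2 := Nat.coprime_div_gcd_div_gcd hg2pos
  -- the unit of a₀
  set A : ℚˣ := Units.mk0 a₀ ha₀pos.ne' with hA
  have hAua : ua = A ^ h := by
    ext
    push_cast [hua, hA]
    exact hah
  -- membership in powSubgroup
  have hmempow : ∀ u : ℚˣ, u ∈ powSubgroup m ↔ ∃ r : ℚˣ, r ^ m = u := by
    intro u
    rw [powSubgroup]
    simp [MonoidHom.mem_range, powMonoidHom_apply]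
  -- key divisibility transfer: m ∣ h * k → m2 ∣ k
  have htrans : ∀ k : ℕ, m ∣ h * k → m2 ∣ k := by
    intro k hk
    have h1 : g2 * m2 ∣ g2 * (h2 * k) := by
      rwa [Nat.mul_div_cancel' hg2m, ← mul_assoc, Nat.mul_div_cancel' hg2h] at *
    have h2' : m2 ∣ h2 * k := (mul_dvd_mul_iff_left (by positivity : g2 ≠ 0)).mp h1
    exact hcop.dvd_of_dvd_mul_left h2'
  -- positive real m-th root statement implies divisibility of j
  have hjdvd : ∀ j : ℤ, ∀ r₀ : ℚ, 0 < r₀ → r₀ ^ m = a ^ j → (m2 : ℤ) ∣ j := by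
    intro j r₀ hr₀ hr₀m
    set k := j.natAbs with hk
    have hkey : m ∣ h * k := by
      have hak : a ^ (k : ℕ) = a₀ ^ (h * k) := by rw [hah, pow_mul]
      rcases le_or_gt 0 j with hj | hj
      · have : a ^ j = a ^ (k : ℕ) := by
          rw [← Int.natAbs_of_nonneg hj, zpow_natCast]
        exact key_pow a₀ hnp ha₀pos m hm (h * k) r₀ hr₀ (by rw [← hak, ← this, hr₀m])
      · have hjk : j = -(k : ℤ) := by omega
        have : a ^ (k : ℕ) = (r₀⁻¹) ^ m := by
          rw [inv_pow, hr₀m, hjk, zpow_neg, inv_inv, zpow_natCast]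
        exact key_pow a₀ hnp ha₀pos m hm (h * k) r₀⁻¹ (by positivity) (hak ▸ this)
    have := htrans k hkey
    have : (m2 : ℤ) ∣ (k : ℤ) := Int.natCast_dvd_natCast.mpr this
    exact (Int.dvd_natAbs).mp (by rwa [← hk])
  rw [hmap, card_closure_pair _ _ (Nat.gcd 2 m) m2 ?_,
    Nat.mul_div_assoc _ hg2m]
  intro i j
  rw [← map_zpow, ← map_zpow, ← map_mul, QuotientGroup.mk'_apply, QuotientGroup.eq_one_iff]
  constructor
  · intro hmem'
    obtain ⟨r, hr⟩ := (hmempow _).mp hmem'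
    -- pass to values in ℚ
    have hrval : ((r : ℚ)) ^ m = (-1 : ℚ) ^ i * a ^ j := by
      have := congrArg (Units.val) hr
      push_cast [Units.val_zpow_eq_zpow_val, Units.val_pow_eq_pow_val] at this
      simpa [huaval] using this
    have hapos : (0 : ℚ) < a ^ j := zpow_pos ha _
    have hrne : ((r : ℚ)) ≠ 0 := r.ne_zero
    rcases Int.even_or_odd i with hi | hi
    · -- i even
      have hs : (-1 : ℚ) ^ i = 1 := hi.neg_one_zpow
      rw [hs, one_mul] at hrval
      have habs : |(r : ℚ)| ^ m = a ^ j := by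
        rw [← abs_pow, hrval, abs_of_pos hapos]
      refine ⟨?_, hjdvd j _ (abs_pos.mpr hrne) habs⟩
      exact dvd_trans (Int.natCast_dvd_natCast.mpr (Nat.gcd_dvd_left 2 m))
        (by exact_mod_cast hi.two_dvd)
    · -- i odd
      have hs : (-1 : ℚ) ^ i = -1 := hi.neg_one_zpow
      rw [hs, neg_one_mul] at hrval
      rcases Nat.even_or_odd m with hme | hmo
      · exfalso
        have h1 : (0 : ℚ) < (r : ℚ) ^ m := hme.pow_pos hrne
        rw [hrval] at h1
        linarith
      · have hgcd1 : Nat.gcd 2 m = 1 :=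
          Nat.prime_two.coprime_iff_not_dvd.mpr (by
            have := Nat.odd_iff.mp hmo; omega)
        have habs : |(r : ℚ)| ^ m = a ^ j := by
          rw [← abs_pow, hrval, abs_neg, abs_of_pos hapos]
        exact ⟨by simp [hgcd1], hjdvd j _ (abs_pos.mpr hrne) habs⟩
  · rintro ⟨⟨i', rfl⟩, ⟨j', rfl⟩⟩
    refine Subgroup.mul_mem _ ?_ ?_
    · rw [zpow_mul]
      refine Subgroup.zpow_mem _ ?_ i'
      rcases Nat.even_or_odd m with hme | hmo
      · have hg : Nat.gcd 2 m = 2 := Nat.gcd_eq_left hme.two_dvd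
        rw [hg]
        refine (hmempow _).mpr ⟨1, ?_⟩
        rw [one_pow, zpow_natCast, neg_one_sq]
      · have hg : Nat.gcd 2 m = 1 :=
          Nat.prime_two.coprime_iff_not_dvd.mpr (by
            have := Nat.odd_iff.mp hmo; omega)
        rw [hg]
        refine (hmempow _).mpr ⟨-1, ?_⟩
        rw [zpow_natCast, pow_one]
        exact hmo.neg_one_pow
    · rw [zpow_mul]
      refine Subgroup.zpow_mem _ ?_ j'
      refine (hmempow _).mpr ⟨A ^ h2, ?_⟩
      rw [zpow_natCast, ← pow_mul, hAua, ← pow_mul]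
      congr 1
      have e1 : h2 * m * g2 = h * m := by
        rw [mul_right_comm, hh2, Nat.div_mul_cancel hg2h]
      have e2 : h * m2 * g2 = h * m := by
        rw [mul_assoc, hm2, mul_comm m2 g2, Nat.mul_div_cancel' hg2m]
      exact Nat.eq_of_mul_eq_mul_right hg2pos (e1.trans e2.symm)
end
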